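/- arXiv:2503.11166 — 10 statements merged into one kernel-verified Lean document; each statement's English description precedes it below -/
import Mathlib

section
/- For every u in H^2(0,T) with u(0)=0 and every constant κ>0, choosing w with ∂_t w(t) = e^{-κt} ∂_t u(t), w(0)=0, the bilinear form a_μ(u,w) := ∫_0^T ∂_t^2 u ∂_t w dt + ∂_t u(0) ∂_t w(0) + μ ∫_0^T u ∂_t w dt satisfies a_μ(u,w) ≥ (κ/(2 e^{κT})) (‖∂_t u‖²_{L²(0,T)} + μ ‖u‖²_{L²(0,T)}). -/
open Real Set

/-- Key integration-by-parts identity: for `f` with derivative `f'` on `[0,T]`,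
`∫ e^{-κt} f' f = e^{-κT} f(T)²/2 - f(0)²/2 + κ/2 ∫ e^{-κt} f²`. -/
theorem aux_ibp (T κ : ℝ) (hT : 0 ≤ T) (f f' : ℝ → ℝ)
    (hf : ∀ t ∈ Icc (0:ℝ) T, HasDerivAt f (f' t) t)
    (hf'c : ContinuousOn f' (Icc (0:ℝ) T)) :
    (∫ t in (0:ℝ)..T, f' t * (Real.exp (-(κ * t)) * f t)) =
      Real.exp (-(κ * T)) * (f T)^2 / 2 - (f 0)^2 / 2
        + κ/2 * ∫ t in (0:ℝ)..T, Real.exp (-(κ * t)) * (f t)^2 := by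
  have hIcc : uIcc (0:ℝ) T = Icc 0 T := uIcc_of_le hT
  have cf : ContinuousOn f (Icc (0:ℝ) T) := fun t ht =>
    (hf t ht).continuousAt.continuousWithinAt
  have cexp : ContinuousOn (fun t => Real.exp (-(κ * t))) (Icc (0:ℝ) T) :=
    (Real.continuous_exp.comp (by continuity)).continuousOn
  set g : ℝ → ℝ := fun t => Real.exp (-(κ * t)) * (f t)^2 / 2 with hg
  have hgd : ∀ t ∈ uIcc (0:ℝ) T,
      HasDerivAt g (f' t * (Real.exp (-(κ * t)) * f t)
        - κ/2 * (Real.exp (-(κ * t)) * (f t)^2)) t := by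
    intro t ht
    rw [hIcc] at ht
    have he : HasDerivAt (fun t => Real.exp (-(κ * t))) (-κ * Real.exp (-(κ * t))) t := by
      have h1 : HasDerivAt (fun t : ℝ => -(κ * t)) (-κ) t := by
        simpa using ((hasDerivAt_id t).const_mul κ).fun_neg
      simpa [mul_comm] using h1.exp
    have hsq : HasDerivAt (fun t => (f t)^2) (2 * f t * f' t) t := by
      simpa using (hf t ht).fun_pow 2
    have := (he.fun_mul hsq).div_const 2
    exact this.congr_deriv (by ring)
  have cint : ContinuousOn (fun t => Real.exp (-(κ * t)) * (f t)^2) (Icc (0:ℝ) T) :=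
    cexp.mul (cf.pow 2)
  have cint1 : ContinuousOn (fun t => f' t * (Real.exp (-(κ * t)) * f t)) (Icc (0:ℝ) T) :=
    hf'c.mul (cexp.mul cf)
  have i1 : IntervalIntegrable (fun t => f' t * (Real.exp (-(κ * t)) * f t))
      MeasureTheory.volume 0 T := (hIcc ▸ cint1).intervalIntegrable
  have i2 : IntervalIntegrable (fun t => κ/2 * (Real.exp (-(κ * t)) * (f t)^2))
      MeasureTheory.volume 0 T := (continuousOn_const.mul (hIcc ▸ cint)).intervalIntegrable
  have ftc : ∫ t in (0:ℝ)..T, (f' t * (Real.exp (-(κ * t)) * f t)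
      - κ/2 * (Real.exp (-(κ * t)) * (f t)^2)) = g T - g 0 :=
    intervalIntegral.integral_eq_sub_of_hasDerivAt hgd
      ((i1.sub i2))
  rw [intervalIntegral.integral_sub i1 i2, intervalIntegral.integral_const_mul] at ftc
  have : g 0 = (f 0)^2 / 2 := by simp [hg]
  rw [this] at ftc
  have : g T = Real.exp (-(κ * T)) * (f T)^2 / 2 := rfl
  rw [this] at ftc
  linarith

/-- Coercivity of the bilinear form `a_μ` with exponential-weight test function:
for `u ∈ H²(0,T)` with `u(0)=0` and `w` with `w' t = e^{-κ t} u' t`, `w(0)=0`,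
`a_μ(u,w) ≥ (κ/(2 e^{κT})) (‖u'‖² + μ ‖u‖²)`. -/
theorem stmt_0 (T μ κ : ℝ) (hT : 0 < T) (hμ : 0 < μ) (hκ : 0 < κ)
    (u u' u'' : ℝ → ℝ)
    (hu : ∀ t ∈ Icc (0:ℝ) T, HasDerivAt u (u' t) t)
    (hu' : ∀ t ∈ Icc (0:ℝ) T, HasDerivAt u' (u'' t) t)
    (hu''c : ContinuousOn u'' (Icc (0:ℝ) T))
    (hu0 : u 0 = 0)
    (w w' : ℝ → ℝ)
    (hw : ∀ t ∈ Icc (0:ℝ) T, HasDerivAt w (w' t) t)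
    (hw' : ∀ t, w' t = Real.exp (-(κ * t)) * u' t)
    (hw0 : w 0 = 0) :
    (∫ t in (0:ℝ)..T, u'' t * w' t) + u' 0 * w' 0 +
        μ * ∫ t in (0:ℝ)..T, u t * w' t
      ≥ κ / (2 * Real.exp (κ * T)) *
        ((∫ t in (0:ℝ)..T, (u' t)^2) + μ * ∫ t in (0:ℝ)..T, (u t)^2) := by
  have hIcc : uIcc (0:ℝ) T = Icc 0 T := uIcc_of_le hT.le
  have cu : ContinuousOn u (Icc (0:ℝ) T) := fun t ht =>
    (hu t ht).continuousAt.continuousWithinAt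
  have cu' : ContinuousOn u' (Icc (0:ℝ) T) := fun t ht =>
    (hu' t ht).continuousAt.continuousWithinAt
  have cexp : ContinuousOn (fun t => Real.exp (-(κ * t))) (Icc (0:ℝ) T) :=
    (Real.continuous_exp.comp (by continuity)).continuousOn
  have hwfun : w' = fun t => Real.exp (-(κ * t)) * u' t := funext hw'
  -- the two integration-by-parts identities
  have ibp1 : (∫ t in (0:ℝ)..T, u'' t * w' t) =
      Real.exp (-(κ * T)) * (u' T)^2 / 2 - (u' 0)^2 / 2
        + κ/2 * ∫ t in (0:ℝ)..T, Real.exp (-(κ * t)) * (u' t)^2 := by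
    rw [show (fun t => u'' t * w' t) = fun t => u'' t * (Real.exp (-(κ * t)) * u' t) by
      funext t; rw [hw']]
    exact aux_ibp T κ hT.le u' u'' hu' hu''c
  have ibp2 : (∫ t in (0:ℝ)..T, u t * w' t) =
      Real.exp (-(κ * T)) * (u T)^2 / 2
        + κ/2 * ∫ t in (0:ℝ)..T, Real.exp (-(κ * t)) * (u t)^2 := by
    have := aux_ibp T κ hT.le u u' hu cu'
    rw [show (fun t => u t * w' t) = fun t => u' t * (Real.exp (-(κ * t)) * u t) by
      funext t; rw [hw']; ring]
    rw [this, hu0]; ring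
  -- pointwise lower bounds for the weighted integrals
  have wbound : ∀ (f : ℝ → ℝ), ContinuousOn f (Icc (0:ℝ) T) →
      (∫ t in (0:ℝ)..T, Real.exp (-(κ * t)) * (f t)^2)
        ≥ Real.exp (-(κ * T)) * ∫ t in (0:ℝ)..T, (f t)^2 := by
    intro f cf
    rw [← intervalIntegral.integral_const_mul]
    apply intervalIntegral.integral_mono_on hT.le
    · exact (continuousOn_const.mul (hIcc ▸ (cf.pow 2))).intervalIntegrable
    · exact (hIcc ▸ (cexp.mul (cf.pow 2))).intervalIntegrable
    · intro t ht
      have h1 : Real.exp (-(κ * T)) ≤ Real.exp (-(κ * t)) := by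
        apply Real.exp_le_exp.2
        nlinarith [ht.2]
      nlinarith [sq_nonneg (f t), Real.exp_pos (-(κ * T))]
  have b1 := wbound u' cu'
  have b2 := wbound u cu
  -- put things together
  have hw'0 : w' 0 = u' 0 := by rw [hw' 0]; simp
  have hexp : κ / (2 * Real.exp (κ * T)) = κ/2 * Real.exp (-(κ * T)) := by
    rw [Real.exp_neg]
    field_simp
  rw [ibp1, ibp2, hw'0, hexp]
  have e1 : (0:ℝ) < Real.exp (-(κ * T)) := Real.exp_pos _
  linarith [mul_le_mul_of_nonneg_left b1 (le_of_lt (by positivity : (0:ℝ) < κ/2)),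
    mul_le_mul_of_nonneg_left b2 (le_of_lt (by positivity : (0:ℝ) < μ * (κ/2))),
    mul_nonneg e1.le (sq_nonneg (u' T)),
    mul_nonneg hμ.le (mul_nonneg e1.le (sq_nonneg (u T))), sq_nonneg (u' 0)]
end

section
/- For every u ∈ H^2(0,T) with u(0)=0, the bilinear form a_μ satisfies a_μ(u, L_T u) ≥ (1/(2eT)) (‖∂_t u‖²_{L²(0,T)} + μ ‖u‖²_{L²(0,T)}), where L_T u(t) = ∫_0^t e^{-s/T} ∂_s u(s) ds. -/
open Real Set

/-- Coercivity of `a_μ(·, L_T ·)`: for `u ∈ H²(0,T)` with `u(0)=0`,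
`a_μ(u, L_T u) ≥ (1/(2eT)) (‖u'‖² + μ ‖u‖²)`, where `∂_t L_T u(t) = e^{-t/T} u'(t)`. -/
theorem stmt_1 (T μ : ℝ) (hT : 0 < T) (hμ : 0 < μ)
    (u u' u'' : ℝ → ℝ)
    (hu : ∀ t ∈ Icc (0:ℝ) T, HasDerivAt u (u' t) t)
    (hu' : ∀ t ∈ Icc (0:ℝ) T, HasDerivAt u' (u'' t) t)
    (hu''c : ContinuousOn u'' (Icc (0:ℝ) T))
    (hu0 : u 0 = 0) :
    (∫ t in (0:ℝ)..T, u'' t * (Real.exp (-(t/T)) * u' t)) +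
        u' 0 * (Real.exp (-((0:ℝ)/T)) * u' 0) +
        μ * ∫ t in (0:ℝ)..T, u t * (Real.exp (-(t/T)) * u' t)
      ≥ 1 / (2 * Real.exp 1 * T) *
        ((∫ t in (0:ℝ)..T, (u' t)^2) + μ * ∫ t in (0:ℝ)..T, (u t)^2) := by
  have hT' : T ≠ 0 := hT.ne'
  have huIcc : uIcc (0:ℝ) T = Icc 0 T := uIcc_of_le hT.le
  have hcu : ContinuousOn u (Icc 0 T) := fun t ht =>
    (hu t ht).continuousAt.continuousWithinAt
  have hcu' : ContinuousOn u' (Icc 0 T) := fun t ht =>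
    (hu' t ht).continuousAt.continuousWithinAt
  have hce : Continuous (fun t : ℝ => Real.exp (-(t/T))) := by continuity
  -- integrabilities
  have intI1 : IntervalIntegrable (fun t => u'' t * (Real.exp (-(t/T)) * u' t))
      MeasureTheory.volume 0 T := by
    apply ContinuousOn.intervalIntegrable
    rw [huIcc]
    exact hu''c.mul (hce.continuousOn.mul hcu')
  have intI2 : IntervalIntegrable (fun t => u t * (Real.exp (-(t/T)) * u' t))
      MeasureTheory.volume 0 T := by
    apply ContinuousOn.intervalIntegrable
    rw [huIcc]
    exact hcu.mul (hce.continuousOn.mul hcu')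
  have intA : IntervalIntegrable (fun t => Real.exp (-(t/T)) * (u' t)^2)
      MeasureTheory.volume 0 T := by
    apply ContinuousOn.intervalIntegrable
    rw [huIcc]
    exact hce.continuousOn.mul (hcu'.pow 2)
  have intB : IntervalIntegrable (fun t => Real.exp (-(t/T)) * (u t)^2)
      MeasureTheory.volume 0 T := by
    apply ContinuousOn.intervalIntegrable
    rw [huIcc]
    exact hce.continuousOn.mul (hcu.pow 2)
  have intC : IntervalIntegrable (fun t => (u' t)^2) MeasureTheory.volume 0 T := by
    apply ContinuousOn.intervalIntegrable
    rw [huIcc]; exact hcu'.pow 2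
  have intD : IntervalIntegrable (fun t => (u t)^2) MeasureTheory.volume 0 T := by
    apply ContinuousOn.intervalIntegrable
    rw [huIcc]; exact hcu.pow 2
  have intEC : IntervalIntegrable (fun t => Real.exp (-1) * (u' t)^2)
      MeasureTheory.volume 0 T := (intC.const_mul _)
  have intED : IntervalIntegrable (fun t => Real.exp (-1) * (u t)^2)
      MeasureTheory.volume 0 T := (intD.const_mul _)
  -- derivative of exp(-(t/T))
  have he : ∀ t : ℝ, HasDerivAt (fun s : ℝ => Real.exp (-(s/T)))
      (Real.exp (-(t/T)) * (-(1/T))) t := by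
    intro t
    have := (((hasDerivAt_id t).div_const T).neg).exp
    simpa using this
  -- FTC for F(t) = exp(-(t/T)) * u'(t)^2 / 2
  have hF : ∀ t ∈ uIcc (0:ℝ) T,
      HasDerivAt (fun s => Real.exp (-(s/T)) * (u' s)^2 / 2)
        (u'' t * (Real.exp (-(t/T)) * u' t)
          - 1/(2*T) * (Real.exp (-(t/T)) * (u' t)^2)) t := by
    intro t ht
    rw [huIcc] at ht
    have h2 : HasDerivAt (fun s => (u' s)^2) (2 * u' t * u'' t) t := by
      simpa using (hu' t ht).fun_pow 2
    have := ((he t).fun_mul h2).div_const 2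
    refine this.congr_deriv ?_
    field_simp
    ring
  have eqF := intervalIntegral.integral_eq_sub_of_hasDerivAt hF
    (by
      apply ContinuousOn.intervalIntegrable
      rw [huIcc]
      exact (hu''c.mul (hce.continuousOn.mul hcu')).sub
        ((continuousOn_const).mul (hce.continuousOn.mul (hcu'.pow 2))))
  rw [intervalIntegral.integral_sub intI1 (intA.const_mul _)] at eqF
  -- FTC for G(t) = exp(-(t/T)) * u(t)^2 / 2
  have hG : ∀ t ∈ uIcc (0:ℝ) T,
      HasDerivAt (fun s => Real.exp (-(s/T)) * (u s)^2 / 2)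
        (u t * (Real.exp (-(t/T)) * u' t)
          - 1/(2*T) * (Real.exp (-(t/T)) * (u t)^2)) t := by
    intro t ht
    rw [huIcc] at ht
    have h2 : HasDerivAt (fun s => (u s)^2) (2 * u t * u' t) t := by
      simpa using (hu t ht).fun_pow 2
    have := ((he t).fun_mul h2).div_const 2
    refine this.congr_deriv ?_
    field_simp
    ring
  have eqG := intervalIntegral.integral_eq_sub_of_hasDerivAt hG
    (by
      apply ContinuousOn.intervalIntegrable
      rw [huIcc]
      exact (hcu.mul (hce.continuousOn.mul hcu')).sub
        ((continuousOn_const).mul (hce.continuousOn.mul (hcu.pow 2))))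
  rw [intervalIntegral.integral_sub intI2 (intB.const_mul _)] at eqG
  -- scalar pull-out
  rw [intervalIntegral.integral_const_mul] at eqF eqG
  -- pointwise lower bounds
  have hA : Real.exp (-1) * ∫ t in (0:ℝ)..T, (u' t)^2
      ≤ ∫ t in (0:ℝ)..T, Real.exp (-(t/T)) * (u' t)^2 := by
    rw [← intervalIntegral.integral_const_mul]
    apply intervalIntegral.integral_mono_on hT.le intEC intA
    intro t ht
    have h1 : (-1 : ℝ) ≤ -(t/T) := by
      have := (div_le_one hT).2 ht.2
      linarith
    exact mul_le_mul_of_nonneg_right (Real.exp_le_exp.2 h1) (sq_nonneg _)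
  have hB : Real.exp (-1) * ∫ t in (0:ℝ)..T, (u t)^2
      ≤ ∫ t in (0:ℝ)..T, Real.exp (-(t/T)) * (u t)^2 := by
    rw [← intervalIntegral.integral_const_mul]
    apply intervalIntegral.integral_mono_on hT.le intED intB
    intro t ht
    have h1 : (-1 : ℝ) ≤ -(t/T) := by
      have := (div_le_one hT).2 ht.2
      linarith
    exact mul_le_mul_of_nonneg_right (Real.exp_le_exp.2 h1) (sq_nonneg _)
  -- notation
  set I1 := ∫ t in (0:ℝ)..T, u'' t * (Real.exp (-(t/T)) * u' t) with hI1
  set I2 := ∫ t in (0:ℝ)..T, u t * (Real.exp (-(t/T)) * u' t) with hI2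
  set A := ∫ t in (0:ℝ)..T, Real.exp (-(t/T)) * (u' t)^2 with hAdef
  set B := ∫ t in (0:ℝ)..T, Real.exp (-(t/T)) * (u t)^2 with hBdef
  set C := ∫ t in (0:ℝ)..T, (u' t)^2 with hCdef
  set D := ∫ t in (0:ℝ)..T, (u t)^2 with hDdef
  simp only [zero_div, neg_zero, Real.exp_zero, hu0, div_self hT', one_mul] at eqF eqG ⊢
  -- eqF : I1 - 1/(2*T) * A = exp(-1) * (u' T)^2 / 2 - 1 * (u' 0)^2 / 2
  -- eqG : I2 - 1/(2*T) * B = exp(-1) * (u T)^2 / 2 - 1 * 0^2 / 2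
  have hE : (0:ℝ) < Real.exp 1 := Real.exp_pos 1
  have hexpneg : Real.exp (-1) = (Real.exp 1)⁻¹ := Real.exp_neg 1
  have rhs_eq : 1 / (2 * Real.exp 1 * T) * (C + μ * D)
      = 1/(2*T) * (Real.exp (-1) * (C + μ * D)) := by
    rw [hexpneg]; ring
  rw [ge_iff_le, rhs_eq]
  have key : Real.exp (-1) * (C + μ * D) ≤ A + μ * B := by
    nlinarith [hA, hB, hμ.le]
  have hmono : 1/(2*T) * (Real.exp (-1) * (C + μ * D)) ≤ 1/(2*T) * (A + μ * B) := by
    apply mul_le_mul_of_nonneg_left key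
    positivity
  have h0 : 0 ≤ Real.exp (-1) * (u' T)^2 / 2 := by positivity
  have h0' : 0 ≤ Real.exp (-1) * (u T)^2 / 2 := by positivity
  have h0'' : 0 ≤ (u' 0)^2 / 2 := by positivity
  have eqGμ : μ * I2 = μ * (1/(2*T) * B) + μ * (Real.exp (-1) * (u T)^2 / 2) := by
    linear_combination μ * eqG
  have h0μ : 0 ≤ μ * (Real.exp (-1) * (u T)^2 / 2) := mul_nonneg hμ.le h0'
  have hexpand : 1/(2*T) * (A + μ * B) = 1/(2*T) * A + μ * (1/(2*T) * B) := by ring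
  linarith [eqF, eqGμ, hmono, hexpand, h0, h0μ, h0'']
end

section
/- For every u ∈ H²(0,T), the identity (∂_t² u, ∂_t L_T u)_{L²(0,T)} + |∂_t u(0)|² = (1/(2T)) (∂_t u, ∂_t L_T u)_{L²(0,T)} + (1/(2e)) |∂_t u(T)|² + (1/2) |∂_t u(0)|² holds, where ∂_t L_T u(t) = e^{-t/T} ∂_t u(t). -/
open Real Set

/-- For every `u ∈ H²(0,T)`:
`(u'', ∂_t L_T u)_{L²} + |u'(0)|² = (1/(2T)) (u', ∂_t L_T u)_{L²} + (1/(2e)) |u'(T)|² + (1/2)|u'(0)|²`,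
where `∂_t L_T u(t) = e^{-t/T} u'(t)`. -/
theorem stmt_2 (T : ℝ) (hT : 0 < T)
    (u u' u'' : ℝ → ℝ)
    (hu : ∀ t ∈ Icc (0:ℝ) T, HasDerivAt u (u' t) t)
    (hu' : ∀ t ∈ Icc (0:ℝ) T, HasDerivAt u' (u'' t) t)
    (hu''c : ContinuousOn u'' (Icc (0:ℝ) T)) :
    (∫ t in (0:ℝ)..T, u'' t * (Real.exp (-(t/T)) * u' t)) + (u' 0)^2
      = 1 / (2 * T) * (∫ t in (0:ℝ)..T, u' t * (Real.exp (-(t/T)) * u' t)) +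
        1 / (2 * Real.exp 1) * (u' T)^2 + 1 / 2 * (u' 0)^2 := by
  have hTle : (0:ℝ) ≤ T := hT.le
  have huIcc : uIcc (0:ℝ) T = Icc (0:ℝ) T := uIcc_of_le hTle
  have hu'c : ContinuousOn u' (Icc (0:ℝ) T) := fun t ht =>
    (hu' t ht).continuousAt.continuousWithinAt
  have hexp : Continuous fun t : ℝ => Real.exp (-(t/T)) := by
    exact Real.continuous_exp.comp (by continuity)
  set F : ℝ → ℝ := fun t => Real.exp (-(t/T)) * (u' t)^2 / 2 with hF
  have hFderiv : ∀ t ∈ Icc (0:ℝ) T, HasDerivAt F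
      (u'' t * (Real.exp (-(t/T)) * u' t)
        - 1 / (2*T) * (u' t * (Real.exp (-(t/T)) * u' t))) t := by
    intro t ht
    have h1 : HasDerivAt (fun t : ℝ => Real.exp (-(t/T)))
        (-(1/T) * Real.exp (-(t/T))) t := by
      have : HasDerivAt (fun t : ℝ => -(t/T)) (-(1/T)) t := by
        simpa [Pi.neg_def] using ((hasDerivAt_id t).div_const T).neg
      simpa [mul_comm, Function.comp_def] using (Real.hasDerivAt_exp (-(t/T))).comp t this
    have h2 : HasDerivAt (fun t => (u' t)^2) (2 * u' t * u'' t) t := by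
      simpa [mul_comm, mul_assoc, Pi.pow_def] using ((hu' t ht).pow 2)
    have := (h1.mul h2).div_const 2
    simp only [Pi.mul_def] at this
    refine this.congr_deriv ?_
    ring
  set g : ℝ → ℝ := fun t => u'' t * (Real.exp (-(t/T)) * u' t)
        - 1 / (2*T) * (u' t * (Real.exp (-(t/T)) * u' t)) with hg
  have hgc : ContinuousOn g (Icc (0:ℝ) T) := by
    apply ContinuousOn.sub
    · exact hu''c.mul ((hexp.continuousOn).mul hu'c)
    · exact (continuousOn_const.mul (hu'c.mul ((hexp.continuousOn).mul hu'c)))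
  have hgint : IntervalIntegrable g MeasureTheory.volume 0 T :=
    (hgc.mono (by rw [huIcc])).intervalIntegrable
  have hFTC : (∫ t in (0:ℝ)..T, g t) = F T - F 0 := by
    apply intervalIntegral.integral_eq_sub_of_hasDerivAt
    · intro t ht
      exact hFderiv t (huIcc ▸ ht)
    · exact hgint
  have h1int : IntervalIntegrable (fun t => u'' t * (Real.exp (-(t/T)) * u' t))
      MeasureTheory.volume 0 T := by
    apply ContinuousOn.intervalIntegrable
    rw [huIcc]
    exact hu''c.mul ((hexp.continuousOn).mul hu'c)
  have h2int : IntervalIntegrable (fun t => 1 / (2*T) * (u' t * (Real.exp (-(t/T)) * u' t)))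
      MeasureTheory.volume 0 T := by
    apply ContinuousOn.intervalIntegrable
    rw [huIcc]
    exact continuousOn_const.mul (hu'c.mul ((hexp.continuousOn).mul hu'c))
  have hsplit : (∫ t in (0:ℝ)..T, g t)
      = (∫ t in (0:ℝ)..T, u'' t * (Real.exp (-(t/T)) * u' t))
        - 1 / (2*T) * (∫ t in (0:ℝ)..T, u' t * (Real.exp (-(t/T)) * u' t)) := by
    rw [hg]
    rw [intervalIntegral.integral_sub h1int h2int, intervalIntegral.integral_const_mul]
  have hFT : F T = 1 / (2 * Real.exp 1) * (u' T)^2 := by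
    simp only [hF]
    rw [div_self hT.ne', Real.exp_neg]
    ring
  have hF0 : F 0 = 1 / 2 * (u' 0)^2 := by
    simp [hF]
    ring
  rw [hsplit] at hFTC
  rw [hFT, hF0] at hFTC
  linarith
end

section
/- For every v ∈ H¹(0,T) with v(0)=0, the identity (v, ∂_t L_T v)_{L²(0,T)} = (1/(2T)) ∫_0^T e^{-t/T} |v(t)|² dt + (1/(2e)) |v(T)|² holds. -/
open Real Set

/-- For every `v ∈ H¹(0,T)` with `v(0)=0`:
`(v, ∂_t L_T v)_{L²(0,T)} = (1/(2T)) ∫_0^T e^{-t/T} |v|² dt + (1/(2e)) |v(T)|²`. -/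
theorem stmt_3 (T : ℝ) (hT : 0 < T)
    (v v' : ℝ → ℝ)
    (hv : ∀ t ∈ Icc (0:ℝ) T, HasDerivAt v (v' t) t)
    (hv'c : ContinuousOn v' (Icc (0:ℝ) T))
    (hv0 : v 0 = 0) :
    (∫ t in (0:ℝ)..T, v t * (Real.exp (-(t/T)) * v' t))
      = 1 / (2 * T) * (∫ t in (0:ℝ)..T, Real.exp (-(t/T)) * (v t)^2) +
        1 / (2 * Real.exp 1) * (v T)^2 := by
  set F : ℝ → ℝ := fun t => Real.exp (-(t/T)) * (v t)^2 / 2 with hF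
  have hvc : ContinuousOn v (Icc 0 T) := fun t ht => (hv t ht).continuousAt.continuousWithinAt
  have hd : ∀ t ∈ Icc (0:ℝ) T, HasDerivAt F
      (v t * (Real.exp (-(t/T)) * v' t) - 1/(2*T) * (Real.exp (-(t/T)) * (v t)^2)) t := by
    intro t ht
    have he : HasDerivAt (fun t => Real.exp (-(t/T))) (Real.exp (-(t/T)) * (-(1/T))) t := by
      have : HasDerivAt (fun t : ℝ => -(t/T)) (-(1/T)) t := by
        simpa using ((hasDerivAt_id t).div_const T).fun_neg
      exact (Real.hasDerivAt_exp _).comp t this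
    have hv2 : HasDerivAt (fun t => (v t)^2) (2 * v t * v' t) t := by
      simpa using (hv t ht).fun_pow 2
    have := (he.fun_mul hv2).div_const 2
    refine this.congr_deriv ?_
    field_simp
    ring
  have key := intervalIntegral.integral_eq_sub_of_hasDerivAt
    (a := (0:ℝ)) (b := T) (f := F)
    (f' := fun t => v t * (Real.exp (-(t/T)) * v' t) - 1/(2*T) * (Real.exp (-(t/T)) * (v t)^2))
    (by simpa [uIcc_of_le hT.le] using hd)
    (by
      apply ContinuousOn.intervalIntegrable
      rw [uIcc_of_le hT.le]
      apply ContinuousOn.sub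
      · exact hvc.mul ((Real.continuous_exp.comp (by continuity)).continuousOn.mul hv'c)
      · exact continuousOn_const.mul
          ((Real.continuous_exp.comp (by continuity)).continuousOn.mul (hvc.pow 2)))
  have hint1 : IntervalIntegrable (fun t => v t * (Real.exp (-(t/T)) * v' t)) MeasureTheory.volume 0 T := by
    apply ContinuousOn.intervalIntegrable
    rw [uIcc_of_le hT.le]
    exact hvc.mul ((Real.continuous_exp.comp (by continuity)).continuousOn.mul hv'c)
  have hint2 : IntervalIntegrable (fun t => 1/(2*T) * (Real.exp (-(t/T)) * (v t)^2)) MeasureTheory.volume 0 T := by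
    apply ContinuousOn.intervalIntegrable
    rw [uIcc_of_le hT.le]
    exact continuousOn_const.mul ((Real.continuous_exp.comp (by continuity)).continuousOn.mul (hvc.pow 2))
  rw [intervalIntegral.integral_sub hint1 hint2] at key
  rw [intervalIntegral.integral_const_mul] at key
  have hFT : F T = 1 / (2 * Real.exp 1) * (v T)^2 := by
    simp only [hF]
    rw [div_self hT.ne', Real.exp_neg]
    have := Real.exp_ne_zero 1
    field_simp
  have hF0 : F 0 = 0 := by simp [hF, hv0]
  rw [hFT, hF0, sub_zero] at key
  linarith
end

section
/- For all u, w ∈ H^2_{0,•}(0,T), the continuity bound a_μ(u, L_T w) ≤ (1 + μ·2T²/π) ‖u‖_{H²_{0,•}(0,T)} ‖∂_t w‖_{L²(0,T)} + |∂_t u(0)| |∂_t w(0)| holds, where ‖u‖_{H²_{0,•}(0,T)} := ‖∂_t² u‖_{L²(0,T)} + T^{-1} ‖∂_t u‖_{L²(0,T)}. -/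
open Real Set

open MeasureTheory intervalIntegral Topology Filter


lemma cs_abs (T : ℝ) (hT : 0 ≤ T) (f g : ℝ → ℝ)
    (hf : ContinuousOn f (Icc 0 T)) (hg : ContinuousOn g (Icc 0 T)) :
    ∫ t in (0:ℝ)..T, |f t| * |g t| ≤
      Real.sqrt (∫ t in (0:ℝ)..T, (f t)^2) * Real.sqrt (∫ t in (0:ℝ)..T, (g t)^2) := by
  have hmeas : MeasurableSet (Ioc (0:ℝ) T) := measurableSet_Ioc
  have hsub : Ioc (0:ℝ) T ⊆ Icc 0 T := Ioc_subset_Icc_self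
  set μ' := volume.restrict (Ioc (0:ℝ) T) with hμ'
  have h2 : ENNReal.ofReal (2:ℝ) = 2 := by norm_num
  have mem : ∀ (h : ℝ → ℝ), ContinuousOn h (Icc 0 T) → MemLp h (ENNReal.ofReal 2) μ' := by
    intro h hc
    rw [h2, memLp_two_iff_integrable_sq ((hc.mono hsub).aestronglyMeasurable hmeas)]
    exact ((hc.pow 2).integrableOn_Icc).mono_set hsub
  have key := integral_mul_norm_le_Lp_mul_Lq (μ := μ')
    (Real.holderConjugate_iff_eq_conjExponent (by norm_num) |>.2 (by norm_num))
    (mem f hf) (mem g hg)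
  have hrw : ∀ (h : ℝ → ℝ), (∫ a, ‖h a‖ ^ (2:ℝ) ∂μ') ^ (1/(2:ℝ)) =
      Real.sqrt (∫ t in (0:ℝ)..T, (h t)^2) := by
    intro h
    rw [intervalIntegral.integral_of_le hT, ← Real.sqrt_eq_rpow]
    congr 1
    refine integral_congr_ae (Filter.Eventually.of_forall fun x => ?_)
    show ‖h x‖ ^ (2:ℝ) = h x ^ 2
    rw [Real.norm_eq_abs, show ((2:ℝ)) = ((2:ℕ):ℝ) by norm_num, Real.rpow_natCast, sq_abs]
  rw [hrw f, hrw g] at key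
  calc ∫ t in (0:ℝ)..T, |f t| * |g t| = ∫ a, ‖f a‖ * ‖g a‖ ∂μ' := by
        rw [intervalIntegral.integral_of_le hT]
        refine integral_congr_ae (Filter.Eventually.of_forall fun x => ?_)
        simp [Real.norm_eq_abs]
    _ ≤ _ := key

lemma poincare_sharp (T : ℝ) (hT : 0 < T) (u u' : ℝ → ℝ)
    (hu : ∀ t ∈ Icc (0:ℝ) T, HasDerivAt u (u' t) t)
    (hu'c : ContinuousOn u' (Icc (0:ℝ) T)) (hu0 : u 0 = 0) :
    ∫ t in (0:ℝ)..T, (u t)^2 ≤ (2*T/Real.pi)^2 * ∫ t in (0:ℝ)..T, (u' t)^2 := by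
  set k : ℝ := Real.pi/(2*T) with hk_def
  have hπ : (0:ℝ) < Real.pi := Real.pi_pos
  have hk : 0 < k := div_pos hπ (by linarith)
  have hkT : k * T = Real.pi/2 := by rw [hk_def]; field_simp
  set c : ℝ → ℝ := fun t => Real.cos (k*t) / Real.sin (k*t) with hc_def
  set ψ : ℝ → ℝ := fun t => if t = 0 then u' 0 / k else u t * c t with hψ_def
  set G : ℝ → ℝ := fun t => k * (u t * ψ t) with hG_def
  set g' : ℝ → ℝ := fun t => k*(2*(u t*u' t)*(c t)) - k^2*((u t)^2*((c t)^2+1)) with hg'_def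
  have hsub : Ioc (0:ℝ) T ⊆ Icc 0 T := Ioc_subset_Icc_self
  have hsin : ∀ t ∈ Ioc (0:ℝ) T, 0 < Real.sin (k*t) := by
    intro t ht
    apply Real.sin_pos_of_pos_of_lt_pi (mul_pos hk ht.1)
    have : k * t ≤ k * T := by nlinarith [ht.2]
    nlinarith
  have hucont : ContinuousOn u (Icc 0 T) :=
    fun t ht => (hu t ht).continuousAt.continuousWithinAt
  have hccont : ∀ t ∈ Ioc (0:ℝ) T, ContinuousWithinAt c (Icc 0 T) t := by
    intro t ht
    exact (((Real.continuous_cos.comp (continuous_const.mul continuous_id)).continuousWithinAt).div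
      ((Real.continuous_sin.comp (continuous_const.mul continuous_id)).continuousWithinAt)
      (ne_of_gt (hsin t ht)))
  have hψcont : ContinuousOn ψ (Icc 0 T) := by
    intro t ht
    by_cases h0 : t = 0
    · subst h0
      have hIcc : Icc (0:ℝ) T \ {0} = Ioc 0 T := by
        ext x; simp [Icc, Ioc, and_comm, lt_iff_le_and_ne, and_assoc, eq_comm]
        tauto
      rw [← continuousWithinAt_diff_self, hIcc]
      have hψ0 : ψ 0 = u' 0 / k := by simp [hψ_def]
      rw [ContinuousWithinAt, hψ0]
      have hne : 𝓝[Ioc (0:ℝ) T] (0:ℝ) ≤ 𝓝[≠] (0:ℝ) :=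
        nhdsWithin_mono _ (fun x hx => ne_of_gt hx.1)
      -- u x / x → u' 0
      have h1 : Filter.Tendsto (fun x => u x / x) (𝓝[Ioc (0:ℝ) T] 0) (𝓝 (u' 0)) := by
        have := (hasDerivAt_iff_tendsto_slope.1 (hu 0 ⟨le_refl _, hT.le⟩)).mono_left hne
        refine this.congr (fun x => ?_)
        simp [slope, hu0, div_eq_inv_mul]
      -- x / sin (k x) → k⁻¹
      have h2 : Filter.Tendsto (fun x => x / Real.sin (k*x)) (𝓝[Ioc (0:ℝ) T] 0) (𝓝 k⁻¹) := by
        have hs : HasDerivAt (fun x => Real.sin (k*x)) k 0 := by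
          have := (Real.hasDerivAt_sin (k*0)).comp 0 ((hasDerivAt_id 0).const_mul k)
          exact this.congr_deriv (by simp)
        have h3 := (hasDerivAt_iff_tendsto_slope.1 hs).mono_left hne
        have h4 : Filter.Tendsto (fun x => Real.sin (k*x) / x) (𝓝[Ioc (0:ℝ) T] 0) (𝓝 k) := by
          refine h3.congr (fun x => ?_); simp [slope, div_eq_inv_mul]
        have := h4.inv₀ (ne_of_gt hk)
        refine this.congr (fun x => ?_)
        rw [inv_div]
      -- cos (k x) → 1
      have h3 : Filter.Tendsto (fun x => Real.cos (k*x)) (𝓝[Ioc (0:ℝ) T] 0) (𝓝 1) := by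
        have hcts : Tendsto (fun x : ℝ => Real.cos (k*x)) (𝓝 (0:ℝ)) (𝓝 (Real.cos (k*0))) :=
          ((Real.continuous_cos.comp (continuous_const.mul continuous_id)).continuousAt)
        simpa using hcts.mono_left nhdsWithin_le_nhds
      have hcomb := (h1.mul (h3.mul h2))
      have : u' 0 * (1 * k⁻¹) = u' 0 / k := by field_simp
      rw [this] at hcomb
      refine hcomb.congr' ?_
      filter_upwards [self_mem_nhdsWithin] with x hx
      have hx0 : x ≠ 0 := ne_of_gt hx.1
      have hsx : Real.sin (k*x) ≠ 0 := ne_of_gt (hsin x hx)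
      simp only [hψ_def, hc_def, if_neg hx0]
      field_simp
    · have ht' : t ∈ Ioc (0:ℝ) T := ⟨lt_of_le_of_ne ht.1 (Ne.symm h0), ht.2⟩
      have hbase : ContinuousWithinAt (fun x => u x * c x) (Icc 0 T) t :=
        (hucont t ht).mul (hccont t ht')
      refine hbase.congr_of_eventuallyEq ?_ (by simp [hψ_def, if_neg h0])
      have : {x : ℝ | x ≠ 0} ∈ 𝓝[Icc (0:ℝ) T] t :=
        nhdsWithin_le_nhds (isOpen_ne.mem_nhds h0)
      filter_upwards [this] with x hx
      simp [hψ_def, if_neg hx]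
  have hGcont : ContinuousOn G (Icc 0 T) := continuousOn_const.mul (hucont.mul hψcont)
  have hG0 : G 0 = 0 := by simp [hG_def, hu0]
  have hGT : G T = 0 := by
    have hT0 : (T:ℝ) ≠ 0 := ne_of_gt hT
    simp only [hG_def, hψ_def, hc_def, if_neg hT0]
    rw [hkT, Real.cos_pi_div_two]
    simp
  -- derivative of G on Ioo
  have hGderiv : ∀ t ∈ Ioo (0:ℝ) T, HasDerivAt G (g' t) t := by
    intro t ht
    have ht' : t ∈ Icc (0:ℝ) T := ⟨ht.1.le, ht.2.le⟩
    have ht0 : t ≠ 0 := ne_of_gt ht.1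
    have hs : Real.sin (k*t) ≠ 0 := ne_of_gt (hsin t ⟨ht.1, ht.2.le⟩)
    have h1 : HasDerivAt u (u' t) t := hu t ht'
    have hcos : HasDerivAt (fun x => Real.cos (k*x)) (-Real.sin (k*t) * k) t := by
      have := (Real.hasDerivAt_cos (k*t)).comp t ((hasDerivAt_id t).const_mul k)
      exact this.congr_deriv (by ring)
    have hsin' : HasDerivAt (fun x => Real.sin (k*x)) (Real.cos (k*t) * k) t := by
      have := (Real.hasDerivAt_sin (k*t)).comp t ((hasDerivAt_id t).const_mul k)
      exact this.congr_deriv (by ring)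
    have hcder : HasDerivAt c ((-Real.sin (k*t) * k * Real.sin (k*t) -
        Real.cos (k*t) * (Real.cos (k*t) * k)) / (Real.sin (k*t))^2) t := hcos.div hsin' hs
    have hdc : (-Real.sin (k*t) * k * Real.sin (k*t) -
        Real.cos (k*t) * (Real.cos (k*t) * k)) / (Real.sin (k*t))^2 = -k*((c t)^2+1) := by
      have hpyth := Real.sin_sq_add_cos_sq (k*t)
      simp only [hc_def]
      field_simp
      nlinarith [hpyth]
    rw [hdc] at hcder
    have hF : HasDerivAt (fun x => k * (u x * (u x * c x)))
        (k * (u' t * (u t * c t) + u t * (u' t * c t + u t * (-k*((c t)^2+1))))) t :=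
      ((h1.mul (h1.mul hcder)).const_mul k)
    have hev : G =ᶠ[𝓝 t] (fun x => k * (u x * (u x * c x))) := by
      filter_upwards [isOpen_ne.mem_nhds ht0] with x hx
      simp [hG_def, hψ_def, if_neg hx]
    have := hF.congr_of_eventuallyEq hev
    refine this.congr_deriv ?_
    simp only [hg'_def]
    ring
  -- integrability of g'
  set p : ℝ → ℝ := fun t => (u' t)^2 - k^2*(u t)^2 with hp_def
  set q : ℝ → ℝ := fun t => (u' t - k * ψ t)^2 with hq_def
  have hpcont : ContinuousOn p (Icc 0 T) := (hu'c.pow 2).sub (continuousOn_const.mul (hucont.pow 2))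
  have hqcont : ContinuousOn q (Icc 0 T) := ((hu'c.sub (continuousOn_const.mul hψcont)).pow 2)
  have hEq : ∀ t ∈ Ioc (0:ℝ) T, p t - q t = g' t := by
    intro t ht
    have ht0 : t ≠ 0 := ne_of_gt ht.1
    simp only [hp_def, hq_def, hg'_def, hψ_def, if_neg ht0]
    ring
  have hpint : IntervalIntegrable p volume 0 T := hpcont.intervalIntegrable_of_Icc hT.le
  have hqint : IntervalIntegrable q volume 0 T := hqcont.intervalIntegrable_of_Icc hT.le
  have hg'int : IntervalIntegrable g' volume 0 T := by
    rw [intervalIntegrable_iff_integrableOn_Ioc_of_le hT.le]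
    have : IntegrableOn (fun t => p t - q t) (Ioc 0 T) volume := by
      have := (hpint.sub hqint)
      rwa [intervalIntegrable_iff_integrableOn_Ioc_of_le hT.le] at this
    exact this.congr_fun hEq measurableSet_Ioc
  -- FTC
  have hFTC : ∫ t in (0:ℝ)..T, g' t = G T - G 0 :=
    intervalIntegral.integral_eq_sub_of_hasDeriv_right_of_le hT.le hGcont
      (fun x hx => (hGderiv x hx).hasDerivWithinAt) hg'int
  rw [hGT, hG0, sub_zero] at hFTC
  -- nonnegativity
  have hnonneg : 0 ≤ ∫ t in (0:ℝ)..T, (p t - g' t) := by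
    apply intervalIntegral.integral_nonneg hT.le
    intro t ht
    by_cases ht0 : t = 0
    · subst ht0
      simp only [hp_def, hg'_def]
      simp [hu0]
      positivity
    · have ht' : t ∈ Ioc (0:ℝ) T := ⟨lt_of_le_of_ne ht.1 (Ne.symm ht0), ht.2⟩
      have := hEq t ht'
      have hq0 : 0 ≤ q t := sq_nonneg _
      linarith
  have hsplit : ∫ t in (0:ℝ)..T, (p t - g' t) = (∫ t in (0:ℝ)..T, p t) - ∫ t in (0:ℝ)..T, g' t :=
    intervalIntegral.integral_sub hpint hg'int
  have hu2int : IntervalIntegrable (fun t => (u t)^2) volume 0 T :=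
    (hucont.pow 2).intervalIntegrable_of_Icc hT.le
  have hu'2int : IntervalIntegrable (fun t => (u' t)^2) volume 0 T :=
    (hu'c.pow 2).intervalIntegrable_of_Icc hT.le
  have hpval : ∫ t in (0:ℝ)..T, p t =
      (∫ t in (0:ℝ)..T, (u' t)^2) - k^2 * ∫ t in (0:ℝ)..T, (u t)^2 := by
    rw [show (fun t => p t) = fun t => (u' t)^2 - k^2*(u t)^2 from rfl]
    rw [intervalIntegral.integral_sub hu'2int (hu2int.const_mul _),
      intervalIntegral.integral_const_mul]
  have hkey : k^2 * (∫ t in (0:ℝ)..T, (u t)^2) ≤ ∫ t in (0:ℝ)..T, (u' t)^2 := by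
    rw [hsplit, hFTC, sub_zero, hpval] at hnonneg
    linarith
  have hconst : (2*T/Real.pi)^2 * k^2 = 1 := by
    rw [hk_def]
    field_simp
  have hmul := mul_le_mul_of_nonneg_left hkey (sq_nonneg (2*T/Real.pi))
  calc ∫ t in (0:ℝ)..T, (u t)^2 = ((2*T/Real.pi)^2 * k^2) * ∫ t in (0:ℝ)..T, (u t)^2 := by
        rw [hconst, one_mul]
    _ = (2*T/Real.pi)^2 * (k^2 * ∫ t in (0:ℝ)..T, (u t)^2) := by ring
    _ ≤ (2*T/Real.pi)^2 * ∫ t in (0:ℝ)..T, (u' t)^2 := hmul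


/-- Continuity bound for `a_μ(u, L_T w)`:
`a_μ(u, L_T w) ≤ (1 + μ 2T²/π) ‖u‖_{H²_{0,•}} ‖w'‖_{L²} + |u'(0)||w'(0)|`,
with `‖u‖_{H²_{0,•}} = ‖u''‖_{L²} + T⁻¹ ‖u'‖_{L²}` and `∂_t L_T w(t) = e^{-t/T} w'(t)`. -/
theorem stmt_8 (T μ : ℝ) (hT : 0 < T) (hμ : 0 < μ)
    (u u' u'' w w' w'' : ℝ → ℝ)
    (hu : ∀ t ∈ Icc (0:ℝ) T, HasDerivAt u (u' t) t)
    (hu' : ∀ t ∈ Icc (0:ℝ) T, HasDerivAt u' (u'' t) t)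
    (hu''c : ContinuousOn u'' (Icc (0:ℝ) T))
    (hu0 : u 0 = 0)
    (hw : ∀ t ∈ Icc (0:ℝ) T, HasDerivAt w (w' t) t)
    (hw' : ∀ t ∈ Icc (0:ℝ) T, HasDerivAt w' (w'' t) t)
    (hw''c : ContinuousOn w'' (Icc (0:ℝ) T))
    (hw0 : w 0 = 0) :
    (∫ t in (0:ℝ)..T, u'' t * (Real.exp (-(t/T)) * w' t)) +
        u' 0 * (Real.exp (-((0:ℝ)/T)) * w' 0) +
        μ * ∫ t in (0:ℝ)..T, u t * (Real.exp (-(t/T)) * w' t)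
      ≤ (1 + μ * (2 * T^2 / Real.pi)) *
          (Real.sqrt (∫ t in (0:ℝ)..T, (u'' t)^2) +
            T⁻¹ * Real.sqrt (∫ t in (0:ℝ)..T, (u' t)^2)) *
          Real.sqrt (∫ t in (0:ℝ)..T, (w' t)^2) +
        |u' 0| * |w' 0| := by
  have hπ : (0:ℝ) < Real.pi := Real.pi_pos
  have hucont : ContinuousOn u (Icc 0 T) := fun t ht => (hu t ht).continuousAt.continuousWithinAt
  have hu'cont : ContinuousOn u' (Icc 0 T) := fun t ht => (hu' t ht).continuousAt.continuousWithinAt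
  have hw'cont : ContinuousOn w' (Icc 0 T) := fun t ht => (hw' t ht).continuousAt.continuousWithinAt
  have hecont : Continuous (fun t : ℝ => Real.exp (-(t/T))) :=
    Real.continuous_exp.comp (continuous_id.div_const T).neg
  -- pointwise bound helper
  have key : ∀ (f : ℝ → ℝ), ContinuousOn f (Icc 0 T) →
      (∫ t in (0:ℝ)..T, f t * (Real.exp (-(t/T)) * w' t)) ≤
        Real.sqrt (∫ t in (0:ℝ)..T, (f t)^2) * Real.sqrt (∫ t in (0:ℝ)..T, (w' t)^2) := by
    intro f hf
    have step1 : (∫ t in (0:ℝ)..T, f t * (Real.exp (-(t/T)) * w' t)) ≤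
        ∫ t in (0:ℝ)..T, |f t| * |w' t| := by
      apply intervalIntegral.integral_mono_on hT.le
      · exact ((hf.mul ((hecont.continuousOn).mul hw'cont)).intervalIntegrable_of_Icc hT.le)
      · exact ((hf.abs.mul hw'cont.abs).intervalIntegrable_of_Icc hT.le)
      · intro t ht
        have he1 : Real.exp (-(t/T)) ≤ 1 := by
          rw [Real.exp_le_one_iff]
          have : 0 ≤ t/T := div_nonneg ht.1 hT.le
          linarith
        have he0 : 0 < Real.exp (-(t/T)) := Real.exp_pos _
        have h := le_abs_self (f t * (Real.exp (-(t/T)) * w' t))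
        rw [abs_mul, abs_mul, abs_of_pos he0] at h
        have h2 : |f t| * (Real.exp (-(t/T)) * |w' t|) ≤ |f t| * |w' t| := by
          have h3 := mul_le_mul_of_nonneg_right he1 (abs_nonneg (w' t))
          have h4 := mul_le_mul_of_nonneg_left h3 (abs_nonneg (f t))
          simpa using h4
        linarith
    exact step1.trans (cs_abs T hT.le f w' hf hw'cont)
  have hA := key u'' hu''c
  have hC := key u hucont
  set a := Real.sqrt (∫ t in (0:ℝ)..T, (u'' t)^2) with ha_def
  set b := Real.sqrt (∫ t in (0:ℝ)..T, (u' t)^2) with hb_def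
  set cN := Real.sqrt (∫ t in (0:ℝ)..T, (w' t)^2) with hc_def
  have ha0 : 0 ≤ a := Real.sqrt_nonneg _
  have hb0 : 0 ≤ b := Real.sqrt_nonneg _
  have hc0 : 0 ≤ cN := Real.sqrt_nonneg _
  -- Poincaré
  have hpoin := poincare_sharp T hT u u' hu hu'cont hu0
  have hsqrtu : Real.sqrt (∫ t in (0:ℝ)..T, (u t)^2) ≤ (2*T/Real.pi) * b := by
    have h1 := Real.sqrt_le_sqrt hpoin
    rwa [Real.sqrt_mul (sq_nonneg _), Real.sqrt_sq (by positivity)] at h1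
  have hC' : (∫ t in (0:ℝ)..T, u t * (Real.exp (-(t/T)) * w' t)) ≤ (2*T/Real.pi) * b * cN :=
    hC.trans (mul_le_mul_of_nonneg_right hsqrtu hc0)
  have hμC : μ * (∫ t in (0:ℝ)..T, u t * (Real.exp (-(t/T)) * w' t)) ≤
      μ * ((2*T/Real.pi) * b * cN) := mul_le_mul_of_nonneg_left hC' hμ.le
  have hB : u' 0 * (Real.exp (-((0:ℝ)/T)) * w' 0) ≤ |u' 0| * |w' 0| := by
    have : Real.exp (-((0:ℝ)/T)) = 1 := by norm_num
    rw [this, one_mul, ← abs_mul]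
    exact le_abs_self _
  have expand : (1 + μ*(2*T^2/Real.pi)) * (a + T⁻¹*b) * cN
      = a*cN + T⁻¹*(b*cN) + μ*(2*T^2/Real.pi)*(a*cN) + μ*((2*T/Real.pi)*b*cN) := by
    field_simp
    ring
  have hn1 : 0 ≤ T⁻¹*(b*cN) := by positivity
  have hn2 : 0 ≤ μ*(2*T^2/Real.pi)*(a*cN) := by positivity
  rw [expand]
  linarith [hA, hB, hμC]
end

section
/- For every u ∈ H^2_{0,•}(0,T), the trace bound |∂_t u(0)| ≤ (2/3) T^{1/2} ‖∂_t² u‖_{L²(0,T)} + T^{-1/2} ‖∂_t u‖_{L²(0,T)} holds; consequently |∂_t u(0)| ≤ T^{1/2} ‖u‖_{H²_{0,•}(0,T)} with ‖u‖_{H²_{0,•}(0,T)} = ‖∂_t² u‖_{L²} + T^{-1} ‖∂_t u‖_{L²}. -/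
open Real Set

/-- Cauchy–Schwarz for interval integrals of continuous functions. -/
lemma cs_aux {T : ℝ} (hT : 0 ≤ T) (f g : ℝ → ℝ)
    (hf : ContinuousOn f (Icc 0 T)) (hg : ContinuousOn g (Icc 0 T)) :
    |∫ t in (0:ℝ)..T, f t * g t| ≤
      Real.sqrt (∫ t in (0:ℝ)..T, (f t)^2) * Real.sqrt (∫ t in (0:ℝ)..T, (g t)^2) := by
  have hu : uIcc (0:ℝ) T = Icc 0 T := uIcc_of_le hT
  have hf' : ContinuousOn f (uIcc (0:ℝ) T) := hu ▸ hf
  have hg' : ContinuousOn g (uIcc (0:ℝ) T) := hu ▸ hg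
  have h1 : IntervalIntegrable (fun t => (f t)^2) MeasureTheory.volume 0 T :=
    (hf'.pow 2).intervalIntegrable
  have h2 : IntervalIntegrable (fun t => f t * g t) MeasureTheory.volume 0 T :=
    (hf'.mul hg').intervalIntegrable
  have h3 : IntervalIntegrable (fun t => (g t)^2) MeasureTheory.volume 0 T :=
    (hg'.pow 2).intervalIntegrable
  set A := ∫ t in (0:ℝ)..T, (f t)^2 with hA
  set B := ∫ t in (0:ℝ)..T, f t * g t with hB
  set C := ∫ t in (0:ℝ)..T, (g t)^2 with hC
  have hA0 : 0 ≤ A := intervalIntegral.integral_nonneg hT fun t _ => sq_nonneg _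
  have key : ∀ x : ℝ, 0 ≤ A * (x * x) + (2 * B) * x + C := by
    intro x
    have e : (fun t => (x * f t + g t)^2)
        = fun t => x^2 * (f t)^2 + ((2*x) * (f t * g t) + (g t)^2) := by
      funext t; ring
    have hnn : 0 ≤ ∫ t in (0:ℝ)..T, (x * f t + g t)^2 :=
      intervalIntegral.integral_nonneg hT fun t _ => sq_nonneg _
    rw [e, intervalIntegral.integral_add (h1.const_mul _) ((h2.const_mul _).add h3),
      intervalIntegral.integral_add (h2.const_mul _) h3,
      intervalIntegral.integral_const_mul, intervalIntegral.integral_const_mul] at hnn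
    nlinarith [hnn]
  have hd := discrim_le_zero key
  rw [discrim] at hd
  have hB2 : B^2 ≤ A * C := by nlinarith
  calc |B| = Real.sqrt (B^2) := (Real.sqrt_sq_eq_abs B).symm
    _ ≤ Real.sqrt (A * C) := Real.sqrt_le_sqrt hB2
    _ = Real.sqrt A * Real.sqrt C := Real.sqrt_mul hA0 C

/-- Trace bound: for `u ∈ H²_{0,•}(0,T)`,
`|u'(0)| ≤ (2/3)√T ‖u''‖_{L²} + T^{-1/2} ‖u'‖_{L²}`, and consequently
`|u'(0)| ≤ √T ‖u‖_{H²_{0,•}}` with `‖u‖_{H²_{0,•}} = ‖u''‖_{L²} + T⁻¹‖u'‖_{L²}`. -/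
theorem stmt_9 (T : ℝ) (hT : 0 < T)
    (u u' u'' : ℝ → ℝ)
    (hu : ∀ t ∈ Icc (0:ℝ) T, HasDerivAt u (u' t) t)
    (hu' : ∀ t ∈ Icc (0:ℝ) T, HasDerivAt u' (u'' t) t)
    (hu''c : ContinuousOn u'' (Icc (0:ℝ) T))
    (hu0 : u 0 = 0) :
    |u' 0| ≤ (2/3) * Real.sqrt T * Real.sqrt (∫ t in (0:ℝ)..T, (u'' t)^2) +
        (Real.sqrt T)⁻¹ * Real.sqrt (∫ t in (0:ℝ)..T, (u' t)^2) ∧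
      |u' 0| ≤ Real.sqrt T *
        (Real.sqrt (∫ t in (0:ℝ)..T, (u'' t)^2) +
          T⁻¹ * Real.sqrt (∫ t in (0:ℝ)..T, (u' t)^2)) := by
  have hT0 : (0:ℝ) ≤ T := hT.le
  have hu' : ∀ t ∈ Icc (0:ℝ) T, HasDerivAt u' (u'' t) t := hu'
  have hcu' : ContinuousOn u' (Icc (0:ℝ) T) := fun t ht =>
    ((hu' t ht).differentiableAt.continuousAt).continuousWithinAt
  have huIcc : uIcc (0:ℝ) T = Icc 0 T := uIcc_of_le hT0
  -- the shifted derivative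
  set w : ℝ → ℝ := fun s => u' s - u' 0 with hw
  have hcw : ContinuousOn w (Icc (0:ℝ) T) := hcu'.sub continuousOn_const
  have hwint : IntervalIntegrable w MeasureTheory.volume 0 T :=
    (huIcc ▸ hcw).intervalIntegrable
  set F : ℝ → ℝ := fun t => ∫ s in (0:ℝ)..t, w s with hF
  set V : ℝ → ℝ := fun t => (T - t) * w t + F t with hV
  have hFcont : ContinuousOn F (Icc (0:ℝ) T) := by
    have := intervalIntegral.continuousOn_primitive_interval
      (μ := MeasureTheory.volume) (f := w) (a := (0:ℝ)) (b := T)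
      (by rw [huIcc]; exact hcw.integrableOn_compact isCompact_Icc)
    rwa [huIcc] at this
  have hVcont : ContinuousOn V (Icc (0:ℝ) T) :=
    (((continuous_const.sub continuous_id).continuousOn).mul hcw).add hFcont
  have hderiv : ∀ x ∈ Ioo (0:ℝ) T, HasDerivAt V ((T - x) * u'' x) x := by
    intro x hx
    have hx' : x ∈ Icc (0:ℝ) T := Ioo_subset_Icc_self hx
    have hFd : HasDerivAt F (w x) x := by
      apply intervalIntegral.integral_hasDerivAt_right
      · exact ((huIcc ▸ hcw).mono (by
          rw [uIcc_of_le hx'.1, huIcc]; exact Icc_subset_Icc le_rfl hx'.2)).intervalIntegrable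
      · exact ⟨Ioo 0 T, Ioo_mem_nhds hx.1 hx.2,
          ((hcw.mono Ioo_subset_Icc_self).aestronglyMeasurable measurableSet_Ioo)⟩
      · exact ((hu' x hx').differentiableAt.continuousAt).sub continuousAt_const
    have h1 : HasDerivAt (fun t => (T - t) * w t)
        ((-1) * w x + (T - x) * u'' x) x := by
      have ha : HasDerivAt (fun t : ℝ => T - t) (-1) x := by
        simpa using (hasDerivAt_id x).const_sub T
      have hb : HasDerivAt w (u'' x) x := (hu' x hx').sub_const (u' 0)
      exact ha.mul hb
    have := h1.add hFd
    convert this using 1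
    · rfl
    · rfl
    · rfl
    · ring
  have hVint : IntervalIntegrable (fun t => (T - t) * u'' t) MeasureTheory.volume 0 T := by
    refine ContinuousOn.intervalIntegrable ?_
    rw [huIcc]
    exact ((continuous_const.sub continuous_id).continuousOn).mul hu''c
  have key : ∫ t in (0:ℝ)..T, (T - t) * u'' t = V T - V 0 :=
    intervalIntegral.integral_eq_sub_of_hasDeriv_right_of_le hT0 hVcont
      (fun x hx => (hderiv x hx).hasDerivWithinAt) hVint
  have hVT : V T = (∫ t in (0:ℝ)..T, u' t) - T * u' 0 := by
    simp only [hV, sub_self, zero_mul, zero_add, hF]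
    rw [intervalIntegral.integral_sub ((huIcc ▸ hcu').intervalIntegrable)
      intervalIntegrable_const]
    simp [mul_comm]
  have hV0 : V 0 = 0 := by
    simp [hV, hF, hw]
  have hmain : T * u' 0 = (∫ t in (0:ℝ)..T, u' t) - ∫ t in (0:ℝ)..T, (T - t) * u'' t := by
    rw [key, hVT, hV0]; ring
  -- Cauchy–Schwarz bounds
  set S1 := Real.sqrt (∫ t in (0:ℝ)..T, (u' t)^2) with hS1
  set S2 := Real.sqrt (∫ t in (0:ℝ)..T, (u'' t)^2) with hS2
  have hS1n : 0 ≤ S1 := Real.sqrt_nonneg _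
  have hS2n : 0 ≤ S2 := Real.sqrt_nonneg _
  have c1 : |∫ t in (0:ℝ)..T, u' t| ≤ Real.sqrt T * S1 := by
    have := cs_aux hT0 (fun _ => (1:ℝ)) u' continuousOn_const hcu'
    simpa using this
  have c2 : |∫ t in (0:ℝ)..T, (T - t) * u'' t| ≤ Real.sqrt (T^3/3) * S2 := by
    have := cs_aux hT0 (fun t => T - t) u''
      ((continuous_const.sub continuous_id).continuousOn) hu''c
    have hTT : (∫ t in (0:ℝ)..T, (T - t)^2) = T^3/3 := by
      have h := intervalIntegral.integral_comp_sub_left (a := (0:ℝ)) (b := T)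
        (fun x : ℝ => x^2) T
      simp only [sub_self, sub_zero] at h
      rw [h, integral_pow]
      norm_num
    rwa [hTT] at this
  have hTbd : T * |u' 0| ≤ Real.sqrt (T^3/3) * S2 + Real.sqrt T * S1 := by
    have : T * |u' 0| = |T * u' 0| := by
      rw [abs_mul, abs_of_nonneg hT0]
    rw [this, hmain]
    calc |(∫ t in (0:ℝ)..T, u' t) - ∫ t in (0:ℝ)..T, (T - t) * u'' t|
        ≤ |∫ t in (0:ℝ)..T, u' t| + |∫ t in (0:ℝ)..T, (T - t) * u'' t| := abs_sub _ _
      _ ≤ Real.sqrt T * S1 + Real.sqrt (T^3/3) * S2 := add_le_add c1 c2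
      _ = Real.sqrt (T^3/3) * S2 + Real.sqrt T * S1 := by ring
  have hsT : Real.sqrt T * Real.sqrt T = T := Real.mul_self_sqrt hT0
  have hsTpos : 0 < Real.sqrt T := Real.sqrt_pos.mpr hT
  have h3 : Real.sqrt 3 * Real.sqrt 3 = 3 := Real.mul_self_sqrt (by norm_num)
  have h3pos : (0:ℝ) < Real.sqrt 3 := Real.sqrt_pos.mpr (by norm_num)
  have h23 : (3:ℝ) ≤ 2 * Real.sqrt 3 := by nlinarith
  have hT3 : Real.sqrt (T^3/3) = T * Real.sqrt T / Real.sqrt 3 := by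
    rw [Real.sqrt_div (by positivity) 3, show T^3 = T^2 * T by ring,
      Real.sqrt_mul (sq_nonneg T), Real.sqrt_sq hT0]
  rw [hT3] at hTbd
  have goal1 : |u' 0| ≤ (2/3) * Real.sqrt T * S2 + (Real.sqrt T)⁻¹ * S1 := by
    rw [← mul_le_mul_iff_right₀ hT]
    have hinv : T * ((Real.sqrt T)⁻¹ * S1) = Real.sqrt T * S1 := by
      field_simp
      linear_combination (-S1) * hsT
    have hfrac : T * Real.sqrt T / Real.sqrt 3 * S2 ≤ T * (2/3 * Real.sqrt T * S2) := by
      rw [div_mul_eq_mul_div, div_le_iff₀ h3pos]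
      nlinarith [mul_nonneg (mul_nonneg hT0 hsTpos.le) hS2n]
    calc T * |u' 0| ≤ T * Real.sqrt T / Real.sqrt 3 * S2 + Real.sqrt T * S1 := hTbd
      _ ≤ T * (2/3 * Real.sqrt T * S2) + T * ((Real.sqrt T)⁻¹ * S1) := by
          rw [hinv]; linarith [hfrac]
      _ = T * (2/3 * Real.sqrt T * S2 + (Real.sqrt T)⁻¹ * S1) := by ring
  refine ⟨goal1, ?_⟩
  have hinv2 : Real.sqrt T * T⁻¹ = (Real.sqrt T)⁻¹ := by
    field_simp
    exact Real.sq_sqrt hT0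
  calc |u' 0| ≤ 2/3 * Real.sqrt T * S2 + (Real.sqrt T)⁻¹ * S1 := goal1
    _ ≤ Real.sqrt T * S2 + Real.sqrt T * T⁻¹ * S1 := by
        rw [hinv2]
        have : 2/3 * Real.sqrt T * S2 ≤ Real.sqrt T * S2 := by nlinarith [mul_nonneg hsTpos.le hS2n]
        linarith
    _ = Real.sqrt T * (S2 + T⁻¹ * S1) := by ring
end

section
/- For every w ∈ H^2_{0,•}(0,T), the coercivity estimate (∂_t² w, ∂_t L_T w)_{L²(0,T)} + |∂_t w(0)|² ≥ (1/(2eT)) ‖∂_t w‖²_{L²(0,T)} holds. -/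
open Real Set

/-- Coercivity estimate: for every `w ∈ H²_{0,•}(0,T)`,
`(w'', ∂_t L_T w)_{L²} + |w'(0)|² ≥ (1/(2eT)) ‖w'‖²_{L²}`, with `∂_t L_T w(t) = e^{-t/T} w'(t)`. -/
theorem stmt_12 (T : ℝ) (hT : 0 < T)
    (w w' w'' : ℝ → ℝ)
    (hw : ∀ t ∈ Icc (0:ℝ) T, HasDerivAt w (w' t) t)
    (hw' : ∀ t ∈ Icc (0:ℝ) T, HasDerivAt w' (w'' t) t)
    (hw''c : ContinuousOn w'' (Icc (0:ℝ) T))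
    (hw0 : w 0 = 0) :
    (∫ t in (0:ℝ)..T, w'' t * (Real.exp (-(t/T)) * w' t)) + (w' 0)^2
      ≥ 1 / (2 * Real.exp 1 * T) * ∫ t in (0:ℝ)..T, (w' t)^2 := by
  have hTne : T ≠ 0 := hT.ne'
  have huIcc : uIcc (0:ℝ) T = Icc 0 T := uIcc_of_le hT.le
  have hcw' : ContinuousOn w' (Icc (0:ℝ) T) :=
    fun t ht => (hw' t ht).continuousAt.continuousWithinAt
  set F : ℝ → ℝ := fun t => 1/2 * (Real.exp (-(t/T)) * (w' t)^2) with hF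
  set g : ℝ → ℝ := fun t =>
    w'' t * (Real.exp (-(t/T)) * w' t) - 1/(2*T) * (Real.exp (-(t/T)) * (w' t)^2) with hg
  have hderiv : ∀ t ∈ Icc (0:ℝ) T, HasDerivAt F (g t) t := by
    intro t ht
    have hexp : HasDerivAt (fun t : ℝ => Real.exp (-(t/T))) (Real.exp (-(t/T)) * (-(1/T))) t := by
      have h1 : HasDerivAt (fun t : ℝ => -(t/T)) (-(1/T)) t := by
        simpa using ((hasDerivAt_id t).div_const T).fun_neg
      exact h1.exp
    have hsq : HasDerivAt (fun t => (w' t)^2) (2 * w' t * w'' t) t := by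
      simpa [mul_comm, mul_assoc, mul_left_comm] using (hw' t ht).fun_pow 2
    have : HasDerivAt F _ t := ((hexp.fun_mul hsq).const_mul (1/2 : ℝ))
    convert this using 1
    show w'' t * (Real.exp (-(t/T)) * w' t) - 1/(2*T) * (Real.exp (-(t/T)) * (w' t)^2) = _
    field_simp
    ring
  have hcexp : ContinuousOn (fun t : ℝ => Real.exp (-(t/T))) (Icc (0:ℝ) T) :=
    (Real.continuous_exp.comp ((continuous_id.div_const T).neg)).continuousOn
  have hint1 : IntervalIntegrable (fun t => w'' t * (Real.exp (-(t/T)) * w' t))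
      MeasureTheory.volume 0 T :=
    (hw''c.mul (hcexp.mul hcw')).intervalIntegrable_of_Icc hT.le
  have hint2 : IntervalIntegrable (fun t => 1/(2*T) * (Real.exp (-(t/T)) * (w' t)^2))
      MeasureTheory.volume 0 T :=
    (((hcexp.mul (hcw'.pow 2))).const_smul (1/(2*T))).intervalIntegrable_of_Icc hT.le
  have hintg : IntervalIntegrable g MeasureTheory.volume 0 T := hint1.sub hint2
  have hFTC : (∫ t in (0:ℝ)..T, g t) = F T - F 0 := by
    apply intervalIntegral.integral_eq_sub_of_hasDerivAt
    · intro t ht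
      exact hderiv t (huIcc ▸ ht)
    · exact hintg
  have hsplit : (∫ t in (0:ℝ)..T, g t)
      = (∫ t in (0:ℝ)..T, w'' t * (Real.exp (-(t/T)) * w' t))
        - ∫ t in (0:ℝ)..T, 1/(2*T) * (Real.exp (-(t/T)) * (w' t)^2) :=
    intervalIntegral.integral_sub hint1 hint2
  have hmono : (∫ t in (0:ℝ)..T, 1/(2*Real.exp 1*T) * (w' t)^2)
      ≤ ∫ t in (0:ℝ)..T, 1/(2*T) * (Real.exp (-(t/T)) * (w' t)^2) := by
    apply intervalIntegral.integral_mono_on hT.le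
    · exact (((hcw'.pow 2)).const_smul (1/(2*Real.exp 1*T))).intervalIntegrable_of_Icc hT.le
    · exact hint2
    · intro t ht
      have h1 : Real.exp (-(1:ℝ)) ≤ Real.exp (-(t/T)) := by
        apply Real.exp_le_exp.2
        have : t / T ≤ 1 := (div_le_one hT).2 ht.2
        linarith
      have h2 : 1/(2*Real.exp 1*T) * (w' t)^2
          = 1/(2*T) * (Real.exp (-(1:ℝ)) * (w' t)^2) := by
        rw [Real.exp_neg]
        field_simp
      rw [h2]
      have := mul_le_mul_of_nonneg_right h1 (sq_nonneg (w' t))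
      have h3 : (0:ℝ) ≤ 1/(2*T) := by positivity
      exact mul_le_mul_of_nonneg_left this h3
  have hconst1 : (∫ t in (0:ℝ)..T, 1/(2*Real.exp 1*T) * (w' t)^2)
      = 1 / (2 * Real.exp 1 * T) * ∫ t in (0:ℝ)..T, (w' t)^2 := by
    simpa using intervalIntegral.integral_const_mul (1/(2*Real.exp 1*T)) (fun t => (w' t)^2)
  have hFT : 0 ≤ F T := by
    simp only [hF]
    positivity
  have hF0 : F 0 = 1/2 * (w' 0)^2 := by
    simp [hF]
  have hexpT : 0 ≤ 1 / (2 * Real.exp 1 * T) := by positivity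
  nlinarith [hFTC, hsplit, hmono, hconst1, sq_nonneg (w' 0)]
end

section
/- Let u ∈ H^2_{0,•}(0,T) solve a_μ(u, L_T w) = (f, ∂_t L_T w)_{L²} for all w ∈ H^2_{0,•}(0,T), and let u_h ∈ S_h solve the same equation restricted to test and trial functions in a finite-dimensional subspace S_h ⊂ H^2_{0,•}(0,T). Let Π_h u ∈ S_h be defined by a_0(Π_h u, L_T w_h) = a_0(u, L_T w_h) for all w_h ∈ S_h. Then ‖∂_t u_h − ∂_t Π_h u‖_{L²(0,T)} ≤ 2 e T μ ‖u − Π_h u‖_{L²(0,T)}. -/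
set_option maxHeartbeats 1000000

open Real Set

private lemma contDiff_deriv_of_two {g : ℝ → ℝ} (hg : ContDiff ℝ 2 g) :
    ContDiff ℝ 1 (deriv g) := by
  have := (contDiff_succ_iff_deriv.mp
    (show ContDiff ℝ ((1:ℕ)+1) g from by exact_mod_cast hg)).2.2
  exact_mod_cast this

/-- Let `u` solve `a_μ(u, L_T w) = (f, ∂_t L_T w)` for all `w ∈ H²_{0,•}(0,T)`, let
`u_h ∈ S_h` solve the Galerkin-discretized problem, and let `Π_h u ∈ S_h` be defined by
`a₀(Π_h u, L_T w_h) = a₀(u, L_T w_h)` for all `w_h ∈ S_h`. Then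
`‖∂_t u_h − ∂_t Π_h u‖_{L²} ≤ 2eTμ ‖u − Π_h u‖_{L²}`. -/
theorem stmt_14 (T μ : ℝ) (hT : 0 < T) (hμ : 0 < μ)
    (f : ℝ → ℝ) (hf : ContinuousOn f (Icc (0:ℝ) T))
    (S : Submodule ℝ (ℝ → ℝ)) (hfin : FiniteDimensional ℝ S)
    (hS : ∀ v ∈ S, ContDiff ℝ 2 v ∧ v 0 = 0)
    (u : ℝ → ℝ) (hu : ContDiff ℝ 2 u) (hu0 : u 0 = 0)
    (hsol : ∀ w : ℝ → ℝ, ContDiff ℝ 2 w → w 0 = 0 →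
      (∫ t in (0:ℝ)..T, deriv (deriv u) t * (Real.exp (-(t/T)) * deriv w t)) +
          deriv u 0 * (Real.exp (-((0:ℝ)/T)) * deriv w 0) +
          μ * ∫ t in (0:ℝ)..T, u t * (Real.exp (-(t/T)) * deriv w t)
        = ∫ t in (0:ℝ)..T, f t * (Real.exp (-(t/T)) * deriv w t))
    (uh : ℝ → ℝ) (huh : uh ∈ S)
    (hsolh : ∀ wh ∈ S,
      (∫ t in (0:ℝ)..T, deriv (deriv uh) t * (Real.exp (-(t/T)) * deriv wh t)) +
          deriv uh 0 * (Real.exp (-((0:ℝ)/T)) * deriv wh 0) +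
          μ * ∫ t in (0:ℝ)..T, uh t * (Real.exp (-(t/T)) * deriv wh t)
        = ∫ t in (0:ℝ)..T, f t * (Real.exp (-(t/T)) * deriv wh t))
    (Pu : ℝ → ℝ) (hPu : Pu ∈ S)
    (hproj : ∀ wh ∈ S,
      (∫ t in (0:ℝ)..T, deriv (deriv Pu) t * (Real.exp (-(t/T)) * deriv wh t)) +
          deriv Pu 0 * (Real.exp (-((0:ℝ)/T)) * deriv wh 0)
        = (∫ t in (0:ℝ)..T, deriv (deriv u) t * (Real.exp (-(t/T)) * deriv wh t)) +
          deriv u 0 * (Real.exp (-((0:ℝ)/T)) * deriv wh 0)) :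
    Real.sqrt (∫ t in (0:ℝ)..T, (deriv uh t - deriv Pu t)^2)
      ≤ 2 * Real.exp 1 * T * μ * Real.sqrt (∫ t in (0:ℝ)..T, (u t - Pu t)^2) := by
  -- the error function
  set v : ℝ → ℝ := fun t => uh t - Pu t with hvdef
  have hvS : v ∈ S := S.sub_mem huh hPu
  obtain ⟨hv2, hv0⟩ := hS v hvS
  obtain ⟨huh2, huh0⟩ := hS uh huh
  obtain ⟨hPu2, hPu0⟩ := hS Pu hPu
  -- smoothness facts
  have hu1 := contDiff_deriv_of_two hu
  have huh1 := contDiff_deriv_of_two huh2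
  have hPu1 := contDiff_deriv_of_two hPu2
  have hv1 := contDiff_deriv_of_two hv2
  have cdv : Continuous (deriv v) := hv1.continuous
  have cddv : Continuous (deriv (deriv v)) := hv1.continuous_deriv le_rfl
  have cE : Continuous (fun t : ℝ => Real.exp (-(t/T))) :=
    Real.continuous_exp.comp ((continuous_id.div_const T).neg)
  -- derivative identities
  have hdv : ∀ t, deriv v t = deriv uh t - deriv Pu t := fun t =>
    deriv_sub (huh2.differentiable (by norm_num) t) (hPu2.differentiable (by norm_num) t)
  have hdvfun : deriv v = fun t => deriv uh t - deriv Pu t := funext hdv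
  have hddv : ∀ t, deriv (deriv v) t = deriv (deriv uh) t - deriv (deriv Pu) t := by
    intro t
    rw [hdvfun]
    exact deriv_fun_sub (huh1.differentiable one_ne_zero t) (hPu1.differentiable one_ne_zero t)
  -- abbreviations
  set A := ∫ t in (0:ℝ)..T, deriv (deriv v) t * (Real.exp (-(t/T)) * deriv v t) with hAdef
  set C := ∫ t in (0:ℝ)..T, v t * (Real.exp (-(t/T)) * deriv v t) with hCdef
  set D := ∫ t in (0:ℝ)..T, (u t - Pu t) * (Real.exp (-(t/T)) * deriv v t) with hDdef
  set X := ∫ t in (0:ℝ)..T, (deriv v t)^2 with hXdef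
  set G := ∫ t in (0:ℝ)..T, (u t - Pu t)^2 with hGdef
  -- integrability
  have ii : ∀ {g : ℝ → ℝ}, Continuous g → IntervalIntegrable g MeasureTheory.volume 0 T :=
    fun h => h.intervalIntegrable 0 T
  have cint : ∀ (g : ℝ → ℝ), Continuous g →
      IntervalIntegrable (fun t => g t * (Real.exp (-(t/T)) * deriv v t))
        MeasureTheory.volume 0 T :=
    fun g hg => ii (hg.mul (cE.mul cdv))
  -- the three variational equations with test function v
  have E1 := hsolh v hvS
  have E2 := hsol v hv2 hv0
  have E3 := hproj v hvS
  simp only [zero_div, neg_zero, Real.exp_zero, one_mul] at E1 E2 E3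
  -- split integrals
  have hAsplit : A = (∫ t in (0:ℝ)..T, deriv (deriv uh) t * (Real.exp (-(t/T)) * deriv v t))
      - ∫ t in (0:ℝ)..T, deriv (deriv Pu) t * (Real.exp (-(t/T)) * deriv v t) := by
    rw [hAdef, ← intervalIntegral.integral_sub (cint _ (huh1.continuous_deriv le_rfl))
      (cint _ (hPu1.continuous_deriv le_rfl))]
    refine intervalIntegral.integral_congr fun t _ => ?_
    rw [hddv t]; ring
  have hCsplit : C = (∫ t in (0:ℝ)..T, uh t * (Real.exp (-(t/T)) * deriv v t))
      - ∫ t in (0:ℝ)..T, Pu t * (Real.exp (-(t/T)) * deriv v t) := by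
    rw [hCdef, ← intervalIntegral.integral_sub (cint _ huh2.continuous) (cint _ hPu2.continuous)]
    refine intervalIntegral.integral_congr fun t _ => ?_
    show (uh t - Pu t) * _ = _
    ring
  have hDsplit : D = (∫ t in (0:ℝ)..T, u t * (Real.exp (-(t/T)) * deriv v t))
      - ∫ t in (0:ℝ)..T, Pu t * (Real.exp (-(t/T)) * deriv v t) := by
    rw [hDdef, ← intervalIntegral.integral_sub (cint _ hu.continuous) (cint _ hPu2.continuous)]
    refine intervalIntegral.integral_congr fun t _ => ?_
    ring
  have hdv0 : deriv v 0 = deriv uh 0 - deriv Pu 0 := hdv 0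
  -- the key identity
  have hkey : A + (deriv v 0)^2 + μ * C = μ * D := by
    rw [hAsplit, hCsplit, hDsplit]
    have hsq : deriv v 0 ^ 2 = deriv uh 0 * deriv v 0 - deriv Pu 0 * deriv v 0 := by
      rw [sq]; nth_rewrite 1 [hdv0]; ring
    linarith [E1, E2, E3, hsq]
  -- FTC for A
  have hderF : ∀ t ∈ Icc (0:ℝ) T, HasDerivAt
      (fun s => 1/2 * (Real.exp (-(s/T)) * (deriv v s)^2))
      (deriv (deriv v) t * (Real.exp (-(t/T)) * deriv v t)
        - 1/(2*T) * (Real.exp (-(t/T)) * (deriv v t)^2)) t := by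
    intro t _
    have hexp : HasDerivAt (fun s : ℝ => Real.exp (-(s/T)))
        (Real.exp (-(t/T)) * (-(1/T))) t := by
      have h1 : HasDerivAt (fun s : ℝ => -(s/T)) (-(1/T)) t :=
        ((hasDerivAt_id t).div_const T).neg
      simpa using h1.exp
    have hsq : HasDerivAt (fun s => (deriv v s)^2)
        (2 * deriv v t * deriv (deriv v) t) t := by
      have := ((hv1.differentiable one_ne_zero t).hasDerivAt).fun_pow 2
      simpa [mul_comm] using this
    have := (hexp.fun_mul hsq).const_mul (1/2 : ℝ)
    refine this.congr_deriv ?_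
    ring
  have hFTC1 : ∫ t in (0:ℝ)..T,
      (deriv (deriv v) t * (Real.exp (-(t/T)) * deriv v t)
        - 1/(2*T) * (Real.exp (-(t/T)) * (deriv v t)^2))
      = 1/2 * (Real.exp (-(T/T)) * (deriv v T)^2)
        - 1/2 * (Real.exp (-((0:ℝ)/T)) * (deriv v 0)^2) := by
    refine intervalIntegral.integral_eq_sub_of_hasDerivAt
      (fun t ht => hderF t (by rwa [uIcc_of_le hT.le] at ht)) ?_
    exact ii ((cddv.mul (cE.mul cdv)).sub (continuous_const.mul (cE.mul (cdv.pow 2))))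
  have hA : A = 1/2 * (Real.exp (-(T/T)) * (deriv v T)^2) - 1/2 * (deriv v 0)^2
      + 1/(2*T) * ∫ t in (0:ℝ)..T, Real.exp (-(t/T)) * (deriv v t)^2 := by
    rw [intervalIntegral.integral_sub (cint _ cddv)
      (ii (g := fun t => 1/(2*T) * (Real.exp (-(t/T)) * (deriv v t)^2)) (continuous_const.mul (cE.mul (cdv.pow 2)))), intervalIntegral.integral_const_mul]
      at hFTC1
    simp only [zero_div, neg_zero, Real.exp_zero, one_mul] at hFTC1
    rw [hAdef]
    linarith [hFTC1]
  -- FTC for C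
  have hderG : ∀ t ∈ Icc (0:ℝ) T, HasDerivAt
      (fun s => 1/2 * (Real.exp (-(s/T)) * (v s)^2))
      (v t * (Real.exp (-(t/T)) * deriv v t)
        - 1/(2*T) * (Real.exp (-(t/T)) * (v t)^2)) t := by
    intro t _
    have hexp : HasDerivAt (fun s : ℝ => Real.exp (-(s/T)))
        (Real.exp (-(t/T)) * (-(1/T))) t := by
      have h1 : HasDerivAt (fun s : ℝ => -(s/T)) (-(1/T)) t :=
        ((hasDerivAt_id t).div_const T).neg
      simpa using h1.exp
    have hsq : HasDerivAt (fun s => (v s)^2) (2 * v t * deriv v t) t := by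
      have := ((hv2.differentiable (by norm_num) t).hasDerivAt).fun_pow 2
      simpa [mul_comm] using this
    have := (hexp.fun_mul hsq).const_mul (1/2 : ℝ)
    refine this.congr_deriv ?_
    ring
  have hFTC2 : ∫ t in (0:ℝ)..T,
      (v t * (Real.exp (-(t/T)) * deriv v t) - 1/(2*T) * (Real.exp (-(t/T)) * (v t)^2))
      = 1/2 * (Real.exp (-(T/T)) * (v T)^2) - 1/2 * (Real.exp (-((0:ℝ)/T)) * (v 0)^2) := by
    refine intervalIntegral.integral_eq_sub_of_hasDerivAt
      (fun t ht => hderG t (by rwa [uIcc_of_le hT.le] at ht)) ?_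
    exact ii ((hv2.continuous.mul (cE.mul cdv)).sub
      (continuous_const.mul (cE.mul (hv2.continuous.pow 2))))
  have hCge : 0 ≤ C := by
    have hint : 0 ≤ ∫ t in (0:ℝ)..T, Real.exp (-(t/T)) * (v t)^2 :=
      intervalIntegral.integral_nonneg hT.le fun t _ => by positivity
    rw [intervalIntegral.integral_sub (cint _ hv2.continuous)
      (ii (g := fun t => 1/(2*T) * (Real.exp (-(t/T)) * (v t)^2)) (continuous_const.mul (cE.mul (hv2.continuous.pow 2)))),
      intervalIntegral.integral_const_mul] at hFTC2
    rw [hCdef]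
    have h1 : (0:ℝ) ≤ 1/2 * (Real.exp (-(T/T)) * (v T)^2) := by positivity
    have h2 : 1/2 * (Real.exp (-((0:ℝ)/T)) * (v 0)^2) = 0 := by
      rw [hv0]; ring
    nlinarith [mul_nonneg (by positivity : (0:ℝ) ≤ 1/(2*T)) hint]
  -- lower bound for A + B²
  have hXnn : 0 ≤ X := intervalIntegral.integral_nonneg hT.le fun t _ => sq_nonneg _
  have hGnn : 0 ≤ G := intervalIntegral.integral_nonneg hT.le fun t _ => sq_nonneg _
  have hmono : (Real.exp 1)⁻¹ * X ≤ ∫ t in (0:ℝ)..T, Real.exp (-(t/T)) * (deriv v t)^2 := by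
    rw [hXdef, ← Real.exp_neg, ← intervalIntegral.integral_const_mul]
    refine intervalIntegral.integral_mono_on hT.le
      (ii (continuous_const.mul (cdv.pow 2))) (ii (cE.mul (cdv.pow 2))) fun t ht => ?_
    have : (-1 : ℝ) ≤ -(t/T) := by
      rw [neg_le_neg_iff]
      exact (div_le_one hT).mpr ht.2
    exact mul_le_mul_of_nonneg_right (Real.exp_le_exp.mpr this) (sq_nonneg _)
  have hAlb' : (∫ t in (0:ℝ)..T, Real.exp (-(t/T)) * (deriv v t)^2)
      ≤ 2*T*(A + (deriv v 0)^2) := by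
    have hA2 : 2*T*A = 2*T*(1/2 * (Real.exp (-(T/T)) * (deriv v T)^2)) - T*(deriv v 0)^2
        + ∫ t in (0:ℝ)..T, Real.exp (-(t/T)) * (deriv v t)^2 := by
      rw [hA]; field_simp
    have p1 : (0:ℝ) ≤ 2*T*(1/2 * (Real.exp (-(T/T)) * (deriv v T)^2)) := by positivity
    have p2 : (0:ℝ) ≤ T*(deriv v 0)^2 := by positivity
    linarith [hA2]
  -- upper bound for D (Young's inequality)
  set c : ℝ := 2 * Real.exp 1 * T * μ with hcdef
  have hc : 0 < c := by positivity
  have hDub : D ≤ c/2 * G + 1/(2*c) * X := by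
    have hpt : ∀ t ∈ Icc (0:ℝ) T,
        (u t - Pu t) * (Real.exp (-(t/T)) * deriv v t)
          ≤ c/2 * (u t - Pu t)^2 + 1/(2*c) * (deriv v t)^2 := by
      intro t ht
      have he1 : Real.exp (-(t/T)) ≤ 1 := by
        rw [← Real.exp_zero]
        exact Real.exp_le_exp.mpr (by
          have : 0 ≤ t/T := div_nonneg ht.1 hT.le
          linarith)
      have he0 : 0 ≤ Real.exp (-(t/T)) := (Real.exp_pos _).le
      rw [show c/2 * (u t - Pu t)^2 + 1/(2*c) * (deriv v t)^2
          = (c^2 * (u t - Pu t)^2 + (deriv v t)^2) / (2*c) from by field_simp,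
        le_div_iff₀ (by positivity)]
      nlinarith [sq_nonneg (c * (u t - Pu t) - Real.exp (-(t/T)) * deriv v t),
        sq_nonneg (deriv v t), sq_nonneg (Real.exp (-(t/T)) * deriv v t),
        mul_nonneg (mul_nonneg (sub_nonneg.mpr he1) he0) (sq_nonneg (deriv v t))]
    calc D ≤ ∫ t in (0:ℝ)..T, (c/2 * (u t - Pu t)^2 + 1/(2*c) * (deriv v t)^2) := by
          rw [hDdef]
          refine intervalIntegral.integral_mono_on hT.le
            (cint _ (hu.continuous.sub hPu2.continuous))
            (ii ((continuous_const.mul ((hu.continuous.sub hPu2.continuous).pow 2)).add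
              (continuous_const.mul (cdv.pow 2)))) hpt
      _ = c/2 * G + 1/(2*c) * X := by
          rw [intervalIntegral.integral_add
            (ii (g := fun t => c/2 * (u t - Pu t)^2) (continuous_const.mul ((hu.continuous.sub hPu2.continuous).pow 2)))
            (ii (g := fun t => 1/(2*c) * (deriv v t)^2) (continuous_const.mul (cdv.pow 2))),
            intervalIntegral.integral_const_mul, intervalIntegral.integral_const_mul]
  -- combine everything
  have hP : (0:ℝ) < Real.exp 1 := Real.exp_pos 1
  have hchain : (Real.exp 1)⁻¹ * X ≤ 2*T*μ*D := by
    have h4 : A + (deriv v 0)^2 ≤ μ*D := by nlinarith [hkey, mul_nonneg hμ.le hCge]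
    calc (Real.exp 1)⁻¹ * X ≤ ∫ t in (0:ℝ)..T, Real.exp (-(t/T)) * (deriv v t)^2 := hmono
      _ ≤ 2*T*(A + (deriv v 0)^2) := hAlb'
      _ ≤ 2*T*(μ*D) := by
          exact mul_le_mul_of_nonneg_left h4 (by positivity)
      _ = 2*T*μ*D := by ring
  have hDub2 : 2*T*μ*D ≤ 2*Real.exp 1*T^2*μ^2*G + (Real.exp 1)⁻¹/2 * X := by
    calc 2*T*μ*D ≤ 2*T*μ*(c/2*G + 1/(2*c)*X) :=
          mul_le_mul_of_nonneg_left hDub (by positivity)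
      _ = 2*Real.exp 1*T^2*μ^2*G + (Real.exp 1)⁻¹/2 * X := by
          rw [hcdef]; field_simp
  have h5 : (Real.exp 1)⁻¹/2 * X ≤ 2*Real.exp 1*T^2*μ^2*G := by linarith
  have hfinal : X ≤ (2 * Real.exp 1 * T * μ)^2 * G := by
    calc X = 2*Real.exp 1*((Real.exp 1)⁻¹/2 * X) := by field_simp
      _ ≤ 2*Real.exp 1*(2*Real.exp 1*T^2*μ^2*G) :=
          mul_le_mul_of_nonneg_left h5 (by positivity)
      _ = (2 * Real.exp 1 * T * μ)^2 * G := by ring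
  -- conclude with square roots
  have hgoalX : (∫ t in (0:ℝ)..T, (deriv uh t - deriv Pu t)^2) = X := by
    rw [hXdef]
    exact intervalIntegral.integral_congr fun t _ => by rw [hdv t]
  rw [hgoalX]
  have h1 : Real.sqrt X ≤ Real.sqrt ((2 * Real.exp 1 * T * μ)^2 * G) :=
    Real.sqrt_le_sqrt hfinal
  rwa [Real.sqrt_mul (sq_nonneg _), Real.sqrt_sq (by positivity)] at h1
end

section
/- Let w : [-T,T] → ℝ₊ satisfy w(t+s) = w(t)w(s) whenever t,s,t+s ∈ [-T,T], and w(t) = 1 + O(t) as |t| → 0. Let {P_r^h}_{r≥0} be the orthogonal polynomials on [0,h] with respect to the weighted inner product (u,v)_w = ∫_0^h u v w dt, normalized so that P_r^h(h)=1, and let {L_r} be the Legendre polynomials on [0,1] with L_r(1)=1. Then for each fixed r, P_r^h(t) = L_r(t/h) + O(h) uniformly for t ∈ [0,h] as h → 0. -/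
open Real Set Polynomial MeasureTheory

lemma sq_int_zero (q : Polynomial ℝ) (h : (∫ x in (0:ℝ)..1, (q.eval x)^2) = 0) : q = 0 := by
  by_contra hq
  have hint : IntervalIntegrable (fun x => (q.eval x)^2) volume 0 1 :=
    Continuous.intervalIntegrable (q.continuous.pow 2) _ _
  have hfin : Set.Finite { x : ℝ | q.IsRoot x } := Polynomial.finite_setOf_isRoot hq
  have hnn : 0 ≤ᵐ[volume] fun x : ℝ => (q.eval x)^2 :=
    Filter.Eventually.of_forall fun x => sq_nonneg _
  have hiff := intervalIntegral.integral_pos_iff_support_of_nonneg_ae hnn hint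
  have hsub : Ioc (0:ℝ) 1 \ { x : ℝ | q.IsRoot x } ⊆
      Function.support (fun x => (q.eval x)^2) ∩ Ioc 0 1 := by
    rintro x ⟨hx1, hx2⟩
    exact ⟨pow_ne_zero _ hx2, hx1⟩
  have hmes : volume (Ioc (0:ℝ) 1 \ { x : ℝ | q.IsRoot x }) = 1 := by
    rw [measure_diff_null (hfin.measure_zero _)]
    simp
  have hpos : (0:ℝ) < ∫ x in (0:ℝ)..1, (q.eval x)^2 := by
    rw [hiff]
    exact ⟨one_pos, lt_of_lt_of_le (by rw [hmes]; norm_num) (measure_mono hsub)⟩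
  linarith [hpos.trans_eq h]

set_option maxHeartbeats 1000000 in
/-- With `w` a multiplicative weight with `w(t) = 1 + O(t)`, the orthogonal polynomials
`P_r^h` on `[0,h]` for the weighted inner product, normalized by `P_r^h(h) = 1`, satisfy
`P_r^h(t) = L_r(t/h) + O(h)` uniformly on `[0,h]` as `h → 0`, where `L_r` is the Legendre
polynomial on `[0,1]` with `L_r(1) = 1`. -/
theorem stmt_17 (T : ℝ) (hT : 0 < T) (w : ℝ → ℝ)
    (hwpos : ∀ t ∈ Icc (-T) T, 0 < w t)
    (hmul : ∀ t s : ℝ, t ∈ Icc (-T) T → s ∈ Icc (-T) T → t + s ∈ Icc (-T) T →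
      w (t + s) = w t * w s)
    (hone : ∃ C₀ > (0:ℝ), ∀ t ∈ Icc (-T) T, |w t - 1| ≤ C₀ * |t|)
    (r : ℕ)
    (L : Polynomial ℝ) (hLdeg : L.natDegree = r) (hL1 : L.eval 1 = 1)
    (hLorth : ∀ q : Polynomial ℝ, q.degree < (r : WithBot ℕ) →
      ∫ t in (0:ℝ)..1, L.eval t * q.eval t = 0)
    (P : ℝ → Polynomial ℝ)
    (hPdeg : ∀ h : ℝ, 0 < h → h ≤ T → (P h).natDegree = r)
    (hPnorm : ∀ h : ℝ, 0 < h → h ≤ T → (P h).eval h = 1)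
    (hPorth : ∀ h : ℝ, 0 < h → h ≤ T → ∀ q : Polynomial ℝ, q.degree < (r : WithBot ℕ) →
      ∫ t in (0:ℝ)..h, (P h).eval t * q.eval t * w t = 0) :
    ∃ C > (0:ℝ), ∃ h₀ > (0:ℝ), ∀ h : ℝ, 0 < h → h ≤ h₀ → h ≤ T →
      ∀ t ∈ Icc (0:ℝ) h, |(P h).eval t - L.eval (t / h)| ≤ C * h := by
  classical
  obtain ⟨C₀, hC₀, hwb⟩ := hone
  -- w is bounded and continuous on [0,T]
  have hsubset : Icc (0:ℝ) T ⊆ Icc (-T) T := Icc_subset_Icc (by linarith) le_rfl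
  have hwle : ∀ t ∈ Icc (-T) T, w t ≤ 1 + C₀ * T := by
    intro t ht
    have h1 := hwb t ht
    have h2 : |t| ≤ T := abs_le.mpr ⟨ht.1, ht.2⟩
    have := abs_le.mp h1
    nlinarith [abs_nonneg t]
  have hwcont : ContinuousOn w (Icc 0 T) := by
    have hlip : LipschitzOnWith (Real.toNNReal ((1 + C₀ * T) * C₀)) w (Icc 0 T) := by
      apply LipschitzOnWith.of_dist_le_mul
      intro x hx y hy
      rw [Real.dist_eq, Real.dist_eq]
      have hxT : x ∈ Icc (-T) T := hsubset hx
      have hyT : y ∈ Icc (-T) T := hsubset hy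
      have hxy : x - y ∈ Icc (-T) T := ⟨by linarith [hx.1, hy.2], by linarith [hx.2, hy.1]⟩
      have hmx : w x = w y * w (x - y) := by
        have h1 := hmul y (x - y) hyT hxy (by simpa using hxT)
        simpa using h1
      have h1 : |w x - w y| = w y * |w (x - y) - 1| := by
        have heq : w x - w y = w y * (w (x - y) - 1) := by rw [hmx]; ring
        rw [heq, abs_mul, abs_of_pos (hwpos y hyT)]
      rw [Real.coe_toNNReal _ (by positivity), h1]
      have h2 := hwb _ hxy
      have h3 := hwle y hyT
      have h4 := hwpos y hyT
      have h5 := abs_nonneg (x - y)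
      have h6 : 0 ≤ C₀ * T := by positivity
      calc w y * |w (x - y) - 1| ≤ (1 + C₀ * T) * (C₀ * |x - y|) := by
            apply mul_le_mul h3 h2 (abs_nonneg _) (by linarith)
        _ = (1 + C₀ * T) * C₀ * |x - y| := by ring
    exact hlip.continuousOn
  -- coefficient vectors and matrices
  set l : Fin (r+1) → ℝ := fun i => L.coeff i with hl
  set c : ℝ → Fin (r+1) → ℝ := fun h i => (P h).coeff i * h ^ (i : ℕ) with hc
  set e : Fin (r+1) → ℝ := fun j => if (j:ℕ) < r then 0 else 1 with he
  set A0 : Matrix (Fin (r+1)) (Fin (r+1)) ℝ :=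
    fun j i => if (j:ℕ) < r then (((i:ℕ)+(j:ℕ)+1 : ℕ) : ℝ)⁻¹ else 1 with hA0
  set A : ℝ → Matrix (Fin (r+1)) (Fin (r+1)) ℝ :=
    fun h j i => if (j:ℕ) < r then ∫ s in (0:ℝ)..1, s^((i:ℕ)+(j:ℕ)) * w (h*s) else 1 with hA
  -- evaluation formulas
  have hevalL : ∀ s : ℝ, L.eval s = ∑ i : Fin (r+1), l i * s ^ (i:ℕ) := by
    intro s
    rw [Polynomial.eval_eq_sum_range' (Nat.lt_succ_of_le hLdeg.le) s,
      ← Fin.sum_univ_eq_sum_range]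
  have hevalP : ∀ h : ℝ, 0 < h → h ≤ T → ∀ s : ℝ,
      (P h).eval (h * s) = ∑ i : Fin (r+1), c h i * s ^ (i:ℕ) := by
    intro h h0 hhT s
    rw [Polynomial.eval_eq_sum_range' (Nat.lt_succ_of_le (hPdeg h h0 hhT).le) (h*s),
      ← Fin.sum_univ_eq_sum_range]
    refine Finset.sum_congr rfl fun i _ => ?_
    simp only [hc, mul_pow]
    ring
  have hmono : ∀ m : ℕ, (∫ t in (0:ℝ)..1, t ^ m) = ((m + 1 : ℕ) : ℝ)⁻¹ := by
    intro m
    rw [integral_pow]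
    push_cast
    rw [one_pow, zero_pow (Nat.succ_ne_zero m)]
    rw [sub_zero, one_div]
  have hLrow : ∀ jn : ℕ, (∫ t in (0:ℝ)..1, L.eval t * t ^ jn)
      = ∑ i : Fin (r+1), (((i:ℕ) + jn + 1 : ℕ) : ℝ)⁻¹ * l i := by
    intro jn
    have hcg : ∀ t ∈ uIcc (0:ℝ) 1, L.eval t * t ^ jn
        = ∑ i : Fin (r+1), l i * t ^ ((i:ℕ) + jn) := by
      intro t _
      rw [hevalL, Finset.sum_mul]
      exact Finset.sum_congr rfl fun i _ => by rw [pow_add]; ring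
    rw [intervalIntegral.integral_congr hcg, intervalIntegral.integral_finset_sum
      (fun i _ => (Continuous.intervalIntegrable (u := fun x : ℝ => l i * x ^ ((i:ℕ) + jn)) (continuous_const.mul (continuous_pow _)) _ _))]
    refine Finset.sum_congr rfl fun i _ => ?_
    rw [intervalIntegral.integral_const_mul, hmono]
    ring
  -- system for L
  have hsysL : A0.mulVec l = e := by
    funext j
    simp only [Matrix.mulVec, dotProduct, hA0, he]
    by_cases hj : (j:ℕ) < r
    · simp only [if_pos hj]
      have hdeg : (X ^ (j:ℕ) : Polynomial ℝ).degree < (r : WithBot ℕ) := by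
        rw [Polynomial.degree_X_pow]
        exact_mod_cast Nat.cast_lt.mpr hj
      have h0 := hLorth _ hdeg
      simp only [Polynomial.eval_pow, Polynomial.eval_X] at h0
      rw [hLrow (j:ℕ)] at h0
      exact h0
    · simp only [if_neg hj, one_mul]
      have h1 := hevalL 1
      simp only [one_pow, mul_one] at h1
      rw [← h1, hL1]
  -- continuity facts for the weight at scale h
  have hwh : ∀ h : ℝ, 0 < h → h ≤ T →
      ContinuousOn (fun s : ℝ => w (h * s)) (uIcc (0:ℝ) 1) := by
    intro h h0 hhT
    rw [uIcc_of_le zero_le_one]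
    refine hwcont.comp ((continuous_const.mul continuous_id).continuousOn) ?_
    intro s hs
    exact ⟨mul_nonneg h0.le hs.1, by nlinarith [hs.2, hs.1]⟩
  have hii : ∀ h : ℝ, 0 < h → h ≤ T → ∀ (m : ℕ) (a : ℝ),
      IntervalIntegrable (fun s => a * (s ^ m * w (h * s))) volume 0 1 := by
    intro h h0 hhT m a
    exact ContinuousOn.intervalIntegrable
      (continuousOn_const.mul (((continuous_pow m).continuousOn).mul (hwh h h0 hhT)))
  -- system for P h
  have hsysP : ∀ h : ℝ, 0 < h → h ≤ T → (A h).mulVec (c h) = e := by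
    intro h h0 hhT
    funext j
    simp only [Matrix.mulVec, dotProduct, hA, he]
    by_cases hj : (j:ℕ) < r
    · simp only [if_pos hj]
      have hdeg : (X ^ (j:ℕ) : Polynomial ℝ).degree < (r : WithBot ℕ) := by
        rw [Polynomial.degree_X_pow]
        exact_mod_cast Nat.cast_lt.mpr hj
      have h0' := hPorth h h0 hhT _ hdeg
      have hcomp : (∫ s in (0:ℝ)..1, (P h).eval (h*s) * (eval (h*s) (X ^ (j:ℕ))) * w (h*s))
          = h⁻¹ • ∫ t in (h*0)..(h*1), (P h).eval t * (eval t (X ^ (j:ℕ))) * w t :=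
        intervalIntegral.integral_comp_mul_left
          (fun t => (P h).eval t * (eval t (X ^ (j:ℕ))) * w t) (ne_of_gt h0)
      rw [mul_zero, mul_one, h0', smul_zero] at hcomp
      simp only [Polynomial.eval_pow, Polynomial.eval_X] at hcomp
      have hcg : ∀ s ∈ uIcc (0:ℝ) 1, (P h).eval (h*s) * (h*s) ^ (j:ℕ) * w (h*s)
          = h ^ (j:ℕ) * ∑ i : Fin (r+1), c h i * (s ^ ((i:ℕ)+(j:ℕ)) * w (h*s)) := by
        intro s _
        rw [hevalP h h0 hhT s, mul_pow, Finset.mul_sum, Finset.sum_mul, Finset.sum_mul]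
        refine Finset.sum_congr rfl fun i _ => by rw [pow_add]; ring
      rw [intervalIntegral.integral_congr hcg, intervalIntegral.integral_const_mul,
        intervalIntegral.integral_finset_sum (fun i _ => hii h h0 hhT _ _)] at hcomp
      have hne : (h:ℝ) ^ (j:ℕ) ≠ 0 := pow_ne_zero _ (ne_of_gt h0)
      have hsum0 : (∑ i : Fin (r+1), ∫ s in (0:ℝ)..1, c h i * (s ^ ((i:ℕ)+(j:ℕ)) * w (h*s))) = 0 :=
        by exact (mul_eq_zero.mp hcomp).resolve_left hne
      calc (∑ i : Fin (r+1), (∫ s in (0:ℝ)..1, s ^ ((i:ℕ)+(j:ℕ)) * w (h*s)) * c h i)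
          = ∑ i : Fin (r+1), ∫ s in (0:ℝ)..1, c h i * (s ^ ((i:ℕ)+(j:ℕ)) * w (h*s)) := by
            refine Finset.sum_congr rfl fun i _ => ?_
            rw [intervalIntegral.integral_const_mul]
            ring
        _ = 0 := hsum0
    · simp only [if_neg hj, one_mul]
      have h1 := hevalP h h0 hhT 1
      simp only [one_pow, mul_one] at h1
      rw [← h1, hPnorm h h0 hhT]
  -- entrywise bound
  have hAbound : ∀ h : ℝ, 0 < h → h ≤ T → ∀ j i : Fin (r+1),
      |A h j i - A0 j i| ≤ C₀ * h := by
    intro h h0 hhT j i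
    by_cases hj : (j:ℕ) < r
    · have hdiff : A h j i - A0 j i
          = ∫ s in (0:ℝ)..1, s ^ ((i:ℕ)+(j:ℕ)) * (w (h*s) - 1) := by
        simp only [hA, hA0, if_pos hj]
        rw [← hmono ((i:ℕ)+(j:ℕ)), ← intervalIntegral.integral_sub
          (by simpa using hii h h0 hhT ((i:ℕ)+(j:ℕ)) 1)
          (Continuous.intervalIntegrable (continuous_pow _) _ _)]
        refine intervalIntegral.integral_congr fun s _ => ?_
        ring
      rw [hdiff]
      have hbd := intervalIntegral.norm_integral_le_of_norm_le_const
        (C := C₀ * h) (f := fun s => s ^ ((i:ℕ)+(j:ℕ)) * (w (h*s) - 1)) (a := 0) (b := 1) ?_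
      · simpa using hbd
      · intro s hs
        rw [uIoc_of_le zero_le_one] at hs
        have hs0 : 0 < s := hs.1
        have hs1 : s ≤ 1 := hs.2
        have hmem : h * s ∈ Icc (-T) T := by
          constructor
          · nlinarith
          · nlinarith
        have h1 : |w (h*s) - 1| ≤ C₀ * (h * s) := by
          have h1' := hwb _ hmem
          rwa [abs_of_pos (mul_pos h0 hs0)] at h1'
        have h2 : |s ^ ((i:ℕ)+(j:ℕ))| ≤ 1 := by
          rw [abs_of_pos (by positivity)]
          exact pow_le_one₀ hs0.le hs1
        rw [Real.norm_eq_abs, abs_mul]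
        calc |s ^ ((i:ℕ)+(j:ℕ))| * |w (h*s) - 1|
            ≤ 1 * |w (h*s) - 1| := mul_le_mul_of_nonneg_right h2 (abs_nonneg _)
          _ = |w (h*s) - 1| := one_mul _
          _ ≤ C₀ * (h * s) := h1
          _ ≤ C₀ * h := by nlinarith [mul_pos hC₀ h0]
    · simp only [hA, hA0, if_neg hj, sub_self, abs_zero]
      positivity
  -- A0 invertible
  have hLr : L.coeff r ≠ 0 := by
    have hL0 : L ≠ 0 := fun hh => by simp [hh] at hL1
    rw [← hLdeg]
    exact Polynomial.leadingCoeff_ne_zero.mpr hL0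
  have hdet : A0.det ≠ 0 := by
    intro hdet0
    obtain ⟨v, hv, hAv⟩ := (Matrix.exists_mulVec_eq_zero_iff).mpr hdet0
    set p : Polynomial ℝ := ∑ i : Fin (r+1), Polynomial.C (v i) * X ^ (i:ℕ) with hp
    have hpeval : ∀ s : ℝ, p.eval s = ∑ i : Fin (r+1), v i * s ^ (i:ℕ) := by
      intro s
      rw [hp, Polynomial.eval_finset_sum]
      simp
    have hpcoeff : ∀ i : Fin (r+1), p.coeff (i:ℕ) = v i := by
      intro i
      rw [hp, Polynomial.finset_sum_coeff]
      rw [Finset.sum_eq_single i]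
      · simp
      · intro k _ hk
        have hkne : (k:ℕ) ≠ (i:ℕ) := fun hh => hk (Fin.ext hh)
        simp [Polynomial.coeff_C_mul, Polynomial.coeff_X_pow, hkne, Ne.symm hkne]
      · simp
    have hpcoeff' : ∀ m : ℕ, r < m → p.coeff m = 0 := by
      intro m hm
      rw [hp, Polynomial.finset_sum_coeff]
      refine Finset.sum_eq_zero fun k _ => ?_
      have hkne : (k:ℕ) ≠ m := by omega
      simp [Polynomial.coeff_C_mul, Polynomial.coeff_X_pow, hkne, Ne.symm hkne]
    have hprow : ∀ jn : ℕ, (∫ t in (0:ℝ)..1, p.eval t * t ^ jn)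
        = ∑ i : Fin (r+1), (((i:ℕ) + jn + 1 : ℕ) : ℝ)⁻¹ * v i := by
      intro jn
      have hcg : ∀ t ∈ uIcc (0:ℝ) 1, p.eval t * t ^ jn
          = ∑ i : Fin (r+1), v i * t ^ ((i:ℕ) + jn) := by
        intro t _
        rw [hpeval, Finset.sum_mul]
        exact Finset.sum_congr rfl fun i _ => by rw [pow_add]; ring
      rw [intervalIntegral.integral_congr hcg, intervalIntegral.integral_finset_sum
        (fun i _ => (Continuous.intervalIntegrable (u := fun x : ℝ => v i * x ^ ((i:ℕ) + jn)) (continuous_const.mul (continuous_pow _)) _ _))]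
      refine Finset.sum_congr rfl fun i _ => ?_
      rw [intervalIntegral.integral_const_mul, hmono]
      ring
    have hrow0 : ∀ jn : ℕ, jn < r → (∫ t in (0:ℝ)..1, p.eval t * t ^ jn) = 0 := by
      intro jn hjn
      have hrow := congrFun hAv ⟨jn, by omega⟩
      simp only [Matrix.mulVec, dotProduct, hA0, Pi.zero_apply] at hrow
      rw [hprow jn]
      simpa [hjn] using hrow
    have hsumv : p.eval 1 = 0 := by
      have hrow := congrFun hAv (Fin.last r)
      simp only [Matrix.mulVec, dotProduct, hA0, Pi.zero_apply, Fin.val_last,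
        lt_irrefl, if_false, one_mul] at hrow
      rw [hpeval]
      simpa using hrow
    have horthp : ∀ q : Polynomial ℝ, q.degree < (r : WithBot ℕ) →
        (∫ t in (0:ℝ)..1, p.eval t * q.eval t) = 0 := by
      intro q hq
      by_cases hq0 : q = 0
      · simp [hq0]
      · have hqd : q.natDegree < r := (Polynomial.natDegree_lt_iff_degree_lt hq0).mpr hq
        have hcg : ∀ t ∈ uIcc (0:ℝ) 1, p.eval t * q.eval t
            = ∑ jn ∈ Finset.range (q.natDegree + 1), q.coeff jn * (p.eval t * t ^ jn) := by
          intro t _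
          rw [Polynomial.eval_eq_sum_range (p := q), Finset.mul_sum]
          exact Finset.sum_congr rfl fun jn _ => by ring
        rw [intervalIntegral.integral_congr hcg, intervalIntegral.integral_finset_sum
          (fun jn _ => (Continuous.intervalIntegrable (u := fun t : ℝ => q.coeff jn * (p.eval t * t ^ jn))
            (continuous_const.mul (p.continuous.mul (continuous_pow _))) _ _))]
        refine Finset.sum_eq_zero fun jn hjn => ?_
        rw [intervalIntegral.integral_const_mul, hrow0 jn
          (lt_of_lt_of_le (Finset.mem_range.mp hjn) hqd), mul_zero]
    set q0 : Polynomial ℝ := Polynomial.C (L.coeff r) * p - Polynomial.C (p.coeff r) * L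
      with hq0def
    have hq0deg : q0.degree < (r : WithBot ℕ) := by
      rw [Polynomial.degree_lt_iff_coeff_zero]
      intro m hm
      have hm' : r ≤ m := by exact_mod_cast hm
      rw [hq0def]
      simp only [Polynomial.coeff_sub, Polynomial.coeff_C_mul]
      rcases eq_or_lt_of_le hm' with hmr | hmr
      · rw [← hmr]
        ring
      · rw [hpcoeff' m hmr, Polynomial.coeff_eq_zero_of_natDegree_lt (by omega : L.natDegree < m)]
        ring
    have hint0 : (∫ t in (0:ℝ)..1, (q0.eval t)^2) = 0 := by
      have hexp : ∀ t ∈ uIcc (0:ℝ) 1, (q0.eval t)^2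
          = L.coeff r * (p.eval t * q0.eval t) - p.coeff r * (L.eval t * q0.eval t) := by
        intro t _
        rw [hq0def]
        simp only [Polynomial.eval_sub, Polynomial.eval_mul, Polynomial.eval_C]
        ring
      rw [intervalIntegral.integral_congr hexp, intervalIntegral.integral_sub
        (Continuous.intervalIntegrable (u := fun t : ℝ => L.coeff r * (p.eval t * q0.eval t)) (continuous_const.mul (p.continuous.mul q0.continuous)) _ _)
        (Continuous.intervalIntegrable (u := fun t : ℝ => p.coeff r * (L.eval t * q0.eval t)) (continuous_const.mul (L.continuous.mul q0.continuous)) _ _),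
        intervalIntegral.integral_const_mul, intervalIntegral.integral_const_mul,
        horthp q0 hq0deg, hLorth q0 hq0deg]
      ring
    have hq00 : q0 = 0 := sq_int_zero q0 hint0
    have heqp : Polynomial.C (L.coeff r) * p = Polynomial.C (p.coeff r) * L :=
      sub_eq_zero.mp hq00
    have hpr : p.coeff r = 0 := by
      have h2 := congrArg (Polynomial.eval 1) heqp
      simp only [Polynomial.eval_mul, Polynomial.eval_C, hL1, hsumv, mul_zero, mul_one] at h2
      exact h2.symm
    have hp0 : p = 0 := by
      rw [hpr, map_zero, zero_mul] at heqp
      rcases mul_eq_zero.mp heqp with hh | hh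
      · exact absurd hh (Polynomial.C_ne_zero.mpr hLr)
      · exact hh
    apply hv
    funext i
    rw [← hpcoeff i, hp0, Polynomial.coeff_zero]
    rfl
  set B : Matrix (Fin (r+1)) (Fin (r+1)) ℝ := A0⁻¹ with hB
  have hBA0 : B * A0 = 1 := Matrix.nonsing_inv_mul _ (isUnit_iff_ne_zero.mpr hdet)
  -- key representation
  have hrep : ∀ h : ℝ, 0 < h → h ≤ T →
      (fun i => c h i - l i) = B.mulVec ((A0 - A h).mulVec (c h)) := by
    intro h h0 hhT
    have h1 : A0.mulVec (fun i => c h i - l i) = (A0 - A h).mulVec (c h) := by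
      have : (fun i => c h i - l i) = c h - l := rfl
      rw [this, Matrix.mulVec_sub, hsysL, ← hsysP h h0 hhT, Matrix.sub_mulVec]
    calc (fun i => c h i - l i)
        = (B * A0).mulVec (fun i => c h i - l i) := by rw [hBA0, Matrix.one_mulVec]
      _ = B.mulVec (A0.mulVec (fun i => c h i - l i)) := by
          rw [← Matrix.mulVec_mulVec]
      _ = B.mulVec ((A0 - A h).mulVec (c h)) := by rw [h1]
  -- constants
  set M : ℝ := (∑ i : Fin (r+1), ∑ j : Fin (r+1), |B i j|) + 1 with hM
  set K : ℝ := (r+1) * M * C₀ with hK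
  have hMpos : 0 < M := by positivity
  have hKpos : 0 < K := by positivity
  set Sl : ℝ := ∑ i : Fin (r+1), |l i| with hSl
  have hrowM : ∀ i : Fin (r+1), (∑ j : Fin (r+1), |B i j|) ≤ M := by
    intro i
    rw [hM]
    have : (∑ j : Fin (r+1), |B i j|) ≤ ∑ i : Fin (r+1), ∑ j : Fin (r+1), |B i j| :=
      Finset.single_le_sum (f := fun i => ∑ j : Fin (r+1), |B i j|)
        (fun i _ => Finset.sum_nonneg fun j _ => abs_nonneg _) (Finset.mem_univ i)
    linarith
  have hSlnn : 0 ≤ Sl := Finset.sum_nonneg fun i _ => abs_nonneg _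
  -- main estimate
  have hkey : ∀ h : ℝ, 0 < h → h ≤ T →
      (∑ i : Fin (r+1), |c h i - l i|) ≤ K * h * (Sl + ∑ i : Fin (r+1), |c h i - l i|) := by
    intro h h0 hhT
    have hre := hrep h h0 hhT
    set Sc : ℝ := ∑ k : Fin (r+1), |c h k| with hSc
    have hScnn : 0 ≤ Sc := Finset.sum_nonneg fun k _ => abs_nonneg _
    have hAc : ∀ j : Fin (r+1), |((A0 - A h).mulVec (c h)) j| ≤ C₀ * h * Sc := by
      intro j
      simp only [Matrix.mulVec, dotProduct, Matrix.sub_apply]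
      calc |∑ k : Fin (r+1), (A0 j k - A h j k) * c h k|
          ≤ ∑ k : Fin (r+1), |(A0 j k - A h j k) * c h k| := Finset.abs_sum_le_sum_abs _ _
        _ ≤ ∑ k : Fin (r+1), (C₀ * h) * |c h k| := by
            refine Finset.sum_le_sum fun k _ => ?_
            rw [abs_mul]
            refine mul_le_mul_of_nonneg_right ?_ (abs_nonneg _)
            rw [abs_sub_comm]
            exact hAbound h h0 hhT j k
        _ = C₀ * h * Sc := by rw [← Finset.mul_sum]
    have hci : ∀ i : Fin (r+1), |c h i - l i| ≤ M * (C₀ * h * Sc) := by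
      intro i
      have h1 : c h i - l i = ∑ j : Fin (r+1), B i j * ((A0 - A h).mulVec (c h)) j := by
        have := congrFun hre i
        simpa [Matrix.mulVec, dotProduct] using this
      rw [h1]
      calc |∑ j : Fin (r+1), B i j * ((A0 - A h).mulVec (c h)) j|
          ≤ ∑ j : Fin (r+1), |B i j * ((A0 - A h).mulVec (c h)) j| :=
            Finset.abs_sum_le_sum_abs _ _
        _ ≤ ∑ j : Fin (r+1), |B i j| * (C₀ * h * Sc) := by
            refine Finset.sum_le_sum fun j _ => ?_
            rw [abs_mul]
            exact mul_le_mul_of_nonneg_left (hAc j) (abs_nonneg _)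
        _ = (∑ j : Fin (r+1), |B i j|) * (C₀ * h * Sc) := by rw [← Finset.sum_mul]
        _ ≤ M * (C₀ * h * Sc) := by
            refine mul_le_mul_of_nonneg_right (hrowM i) (by positivity)
    have hScle : Sc ≤ Sl + ∑ i : Fin (r+1), |c h i - l i| := by
      rw [hSc, hSl, ← Finset.sum_add_distrib]
      refine Finset.sum_le_sum fun k _ => ?_
      calc |c h k| = |l k + (c h k - l k)| := by ring_nf
        _ ≤ |l k| + |c h k - l k| := abs_add_le _ _
    calc (∑ i : Fin (r+1), |c h i - l i|)
        ≤ ∑ _i : Fin (r+1), M * (C₀ * h * Sc) := Finset.sum_le_sum fun i _ => hci i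
      _ = (r+1) * (M * (C₀ * h * Sc)) := by
          rw [Finset.sum_const, Finset.card_univ, Fintype.card_fin, nsmul_eq_mul]
          push_cast
          ring
      _ = K * h * Sc := by rw [hK]; ring
      _ ≤ K * h * (Sl + ∑ i : Fin (r+1), |c h i - l i|) := by
          refine mul_le_mul_of_nonneg_left hScle (by positivity)
  clear_value B M K Sl
  refine ⟨2 * K * Sl + 1, by positivity, min T (1 / (2*K)), by positivity, ?_⟩
  intro h h0 hh0 hhT t ht
  have hKh : K * h ≤ 1/2 := by
    have : h ≤ 1 / (2*K) := le_trans hh0 (min_le_right _ _)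
    rw [le_div_iff₀ (by positivity)] at this
    nlinarith
  set D : ℝ := ∑ i : Fin (r+1), |c h i - l i| with hD
  have hDnn : 0 ≤ D := Finset.sum_nonneg fun i _ => abs_nonneg _
  clear_value D
  have hDle : D ≤ 2 * K * Sl * h := by
    have h1 := hkey h h0 hhT
    rw [← hD] at h1
    have h2 : K * h * (Sl + D) = K * h * Sl + K * h * D := by ring
    have h3 : K * h * D ≤ (1/2) * D := mul_le_mul_of_nonneg_right hKh hDnn
    nlinarith
  -- final bound
  have hs : t / h ∈ Icc (0:ℝ) 1 := by
    constructor
    · exact div_nonneg ht.1 h0.le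
    · rw [div_le_one h0]; exact ht.2
  have heq : (P h).eval t - L.eval (t / h) = ∑ i : Fin (r+1), (c h i - l i) * (t/h) ^ (i:ℕ) := by
    have : (P h).eval t = (P h).eval (h * (t/h)) := by
      rw [mul_div_cancel₀ _ (ne_of_gt h0)]
    rw [this, hevalP h h0 hhT, hevalL]
    rw [← Finset.sum_sub_distrib]
    refine Finset.sum_congr rfl fun i _ => by ring
  rw [heq]
  calc |∑ i : Fin (r+1), (c h i - l i) * (t/h) ^ (i:ℕ)|
      ≤ ∑ i : Fin (r+1), |(c h i - l i) * (t/h) ^ (i:ℕ)| := Finset.abs_sum_le_sum_abs _ _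
    _ ≤ ∑ i : Fin (r+1), |c h i - l i| := by
        refine Finset.sum_le_sum fun i _ => ?_
        rw [abs_mul]
        have h1 : |(t/h) ^ (i:ℕ)| ≤ 1 := by
          rw [abs_pow]
          refine pow_le_one₀ (abs_nonneg _) ?_
          rw [abs_of_nonneg hs.1]; exact hs.2
        nlinarith [abs_nonneg (c h i - l i)]
    _ = D := hD.symm
    _ ≤ 2 * K * Sl * h := hDle
    _ ≤ (2 * K * Sl + 1) * h := by nlinarith
end

section
/- Let w satisfy w(t+s) = w(t)w(s), w(t) = 1 + O(t), and 0 ≤ w_0 ≤ w(t) ≤ w_1 on [0,T]. On a uniform mesh t_j = jh (h = T/N), let P_r^i be the orthogonal polynomials on [t_{i-1}, t_i] for the weight w, normalized with P_r^i(t_i)=1. Then as h → 0: (a) P_r^i(t_{i-1}) = (−1)^r + O(h); (b) ∫_{t_{i-1}}^{t_i} [P_r^i]² w dt = O(h); (c) ∫_{t_{i-1}}^{t_i} P_r^i(t)(t−t_{i-1})^k w(t) dt = O(h^{k+1}), with implicit constants independent of i. -/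
open Real Set Polynomial MeasureTheory intervalIntegral

lemma poly_sq_int_pos (c q : Polynomial ℝ)
    (hc0 : ∀ s ∈ Icc (0:ℝ) 1, 0 ≤ c.eval s)
    (hc : ∀ s ∈ Ioo (0:ℝ) 1, 0 < c.eval s) (hq : q ≠ 0) :
    0 < ∫ s in (0:ℝ)..1, c.eval s * q.eval s ^ 2 := by
  set f : ℝ → ℝ := fun s => c.eval s * q.eval s ^ 2 with hf
  have hcont : Continuous f := c.continuous.mul (q.continuous.pow 2)
  have hfi : IntervalIntegrable f volume 0 1 := hcont.intervalIntegrable _ _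
  have hnn : 0 ≤ᵐ[volume.restrict (uIoc (0:ℝ) 1)] f := by
    rw [uIoc_of_le (by norm_num : (0:ℝ) ≤ 1)]
    filter_upwards [ae_restrict_mem measurableSet_Ioc] with s hs
    exact mul_nonneg (hc0 s ⟨hs.1.le, hs.2⟩) (sq_nonneg _)
  rw [integral_pos_iff_support_of_nonneg_ae' hnn hfi]
  refine ⟨by norm_num, ?_⟩
  have hroots : ({x | IsRoot q x} : Set ℝ).Finite := Polynomial.finite_setOf_isRoot hq
  have hsub : Ioo (0:ℝ) 1 \ {x | IsRoot q x} ⊆ Function.support f ∩ Ioc 0 1 := by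
    intro x hx
    rcases hx with ⟨hx1, hx2⟩
    refine ⟨?_, hx1.1, hx1.2.le⟩
    have h1 : 0 < c.eval x := hc x hx1
    have h2 : q.eval x ≠ 0 := hx2
    simp only [Function.mem_support, hf]
    positivity
  have hm : volume (Ioo (0:ℝ) 1 \ {x | IsRoot q x}) = 1 := by
    rw [measure_diff_null (hroots.measure_zero _)]
    simp
  calc (0:ENNReal) < 1 := by norm_num
    _ = volume (Ioo (0:ℝ) 1 \ {x | IsRoot q x}) := hm.symm
    _ ≤ volume (Function.support f ∩ Ioc 0 1) := measure_mono hsub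

lemma orth_eval (p : Polynomial ℝ) (r : ℕ)
    (hp : ∀ m, m < r → ∫ s in (0:ℝ)..1, p.eval s * s ^ m = 0)
    (q : Polynomial ℝ) (hq : q.natDegree < r) :
    ∫ s in (0:ℝ)..1, p.eval s * q.eval s = 0 := by
  have hev : ∀ s : ℝ, p.eval s * q.eval s
      = ∑ m ∈ Finset.range r, q.coeff m * (p.eval s * s ^ m) := by
    intro s
    rw [Polynomial.eval_eq_sum_range' hq]
    rw [Finset.mul_sum]
    congr 1; ext m; ring
  simp_rw [hev]
  rw [intervalIntegral.integral_finset_sum]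
  · refine Finset.sum_eq_zero fun m hm => ?_
    rw [intervalIntegral.integral_const_mul, hp m (Finset.mem_range.mp hm), mul_zero]
  · intro m _
    exact (continuous_const.mul ((p.continuous).mul (continuous_pow _))).intervalIntegrable _ _

noncomputable def vecPoly (r : ℕ) (v : Fin (r+1) → ℝ) : Polynomial ℝ :=
  ∑ j : Fin (r+1), C (v j) * X ^ (j:ℕ)

lemma vecPoly_natDegree_le (r : ℕ) (v : Fin (r+1) → ℝ) : (vecPoly r v).natDegree ≤ r := by
  refine Polynomial.natDegree_sum_le_of_forall_le _ _ fun j _ => ?_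
  refine le_trans (Polynomial.natDegree_C_mul_le _ _) ?_
  simpa using Nat.lt_succ_iff.mp j.2

lemma vecPoly_eval (r : ℕ) (v : Fin (r+1) → ℝ) (x : ℝ) :
    (vecPoly r v).eval x = ∑ j : Fin (r+1), v j * x ^ (j:ℕ) := by
  rw [vecPoly, Polynomial.eval_finset_sum]
  simp

lemma vecPoly_coeff (r : ℕ) (v : Fin (r+1) → ℝ) (j : Fin (r+1)) :
    (vecPoly r v).coeff (j:ℕ) = v j := by
  classical
  rw [vecPoly, Polynomial.finset_sum_coeff]
  rw [Finset.sum_eq_single j]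
  · simp
  · intro b _ hb
    have : (b:ℕ) ≠ (j:ℕ) := fun h => hb (Fin.ext h)
    simp [Polynomial.coeff_C_mul, Polynomial.coeff_X_pow, this.symm]
  · simp

lemma vecPoly_moment (r : ℕ) (v : Fin (r+1) → ℝ) (m : ℕ) :
    ∫ s in (0:ℝ)..1, (vecPoly r v).eval s * s ^ m
      = ∑ j : Fin (r+1), v j * (1 / ((m:ℝ) + (j:ℕ) + 1)) := by
  have : ∀ s : ℝ, (vecPoly r v).eval s * s ^ m
      = ∑ j : Fin (r+1), v j * s ^ ((m:ℕ) + (j:ℕ)) := by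
    intro s
    rw [vecPoly_eval, Finset.sum_mul]
    congr 1; ext j; ring
  simp_rw [this]
  rw [intervalIntegral.integral_finset_sum]
  · congr 1; ext j
    rw [intervalIntegral.integral_const_mul, integral_pow]
    push_cast
    norm_num [add_comm (m:ℝ)]
  · intro j _
    exact (continuous_const.mul (continuous_pow _)).intervalIntegrable _ _

noncomputable def Lmat (r : ℕ) : Matrix (Fin (r+1)) (Fin (r+1)) ℝ :=
  fun m j => if (m:ℕ) < r then 1/((m:ℕ)+(j:ℕ)+1 : ℝ) else 1

def eVec (r : ℕ) : Fin (r+1) → ℝ := fun m => if (m:ℕ) < r then 0 else 1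

lemma mulVec_row_lt (r : ℕ) (v : Fin (r+1) → ℝ) (m : ℕ) (hm : m < r) :
    (Lmat r).mulVec v ⟨m, hm.trans (Nat.lt_succ_self r)⟩
      = ∫ s in (0:ℝ)..1, (vecPoly r v).eval s * s ^ m := by
  rw [vecPoly_moment]
  rw [Matrix.mulVec, dotProduct]
  congr 1; ext j
  simp only [Lmat, hm, if_true]
  ring

lemma mulVec_row_last (r : ℕ) (v : Fin (r+1) → ℝ) :
    (Lmat r).mulVec v (Fin.last r) = (vecPoly r v).eval 1 := by
  rw [vecPoly_eval]
  rw [Matrix.mulVec, dotProduct]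
  congr 1; ext j
  simp [Lmat]

lemma poly_zero_of_orth_row (r : ℕ) (p : Polynomial ℝ) (hdeg : p.natDegree ≤ r)
    (hrows : ∀ m, m < r → ∫ s in (0:ℝ)..1, p.eval s * s ^ m = 0)
    (hlast : p.eval 1 = 0) : p = 0 := by
  by_contra hp
  have hdvd : (X - C (1:ℝ)) ∣ p := Polynomial.dvd_iff_isRoot.mpr hlast
  obtain ⟨q, hq⟩ := hdvd
  have hqne : q ≠ 0 := by
    intro h; rw [h, mul_zero] at hq; exact hp hq
  have hXC : (X - C (1:ℝ)) ≠ 0 := Polynomial.X_sub_C_ne_zero 1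
  have hdq : q.natDegree < r := by
    have := Polynomial.natDegree_mul hXC hqne
    rw [← hq] at this
    rw [Polynomial.natDegree_X_sub_C] at this
    omega
  have h0 : ∫ s in (0:ℝ)..1, p.eval s * q.eval s = 0 := orth_eval p r hrows q hdq
  have hpos : 0 < ∫ s in (0:ℝ)..1, (C 1 - X : Polynomial ℝ).eval s * q.eval s ^ 2 := by
    refine poly_sq_int_pos _ _ (fun s hs => ?_) (fun s hs => ?_) hqne
    · simp only [Polynomial.eval_sub, Polynomial.eval_C, Polynomial.eval_X]
      linarith [hs.2]
    · simp only [Polynomial.eval_sub, Polynomial.eval_C, Polynomial.eval_X]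
      linarith [hs.2]
  have heq : ∫ s in (0:ℝ)..1, (C 1 - X : Polynomial ℝ).eval s * q.eval s ^ 2
      = -∫ s in (0:ℝ)..1, p.eval s * q.eval s := by
    rw [← intervalIntegral.integral_neg]
    congr 1; ext s
    rw [hq]
    simp only [Polynomial.eval_mul, Polynomial.eval_sub, Polynomial.eval_C, Polynomial.eval_X]
    ring
  rw [heq, h0, neg_zero] at hpos
  exact lt_irrefl _ hpos

lemma det_Lmat_ne_zero (r : ℕ) : (Lmat r).det ≠ 0 := by
  intro hdet
  obtain ⟨v, hvne, hv⟩ := (Matrix.exists_mulVec_eq_zero_iff).mpr hdet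
  have hrows : ∀ m, m < r → ∫ s in (0:ℝ)..1, (vecPoly r v).eval s * s ^ m = 0 := by
    intro m hm
    rw [← mulVec_row_lt r v m hm, hv]; rfl
  have hlast : (vecPoly r v).eval 1 = 0 := by
    rw [← mulVec_row_last r v, hv]; rfl
  have hz := poly_zero_of_orth_row r (vecPoly r v) (vecPoly_natDegree_le r v) hrows hlast
  apply hvne
  ext j
  rw [← vecPoly_coeff r v j, hz]
  simp

lemma legendre_endpoint (r : ℕ) (p : Polynomial ℝ) (hdeg : p.natDegree ≤ r)
    (hrows : ∀ m, m < r → ∫ s in (0:ℝ)..1, p.eval s * s ^ m = 0)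
    (hlast : p.eval 1 = 1) : p.eval 0 = (-1:ℝ)^r := by
  rcases Nat.eq_zero_or_pos r with hr | hr
  · subst hr
    obtain ⟨c, rfl⟩ := Polynomial.natDegree_eq_zero.mp (Nat.le_zero.mp hdeg)
    simpa using hlast
  set p₁ : Polynomial ℝ := p.comp (C 1 - X) with hp₁
  have hp₁eval : ∀ x : ℝ, p₁.eval x = p.eval (1 - x) := by
    intro x; simp [hp₁]
  have hlin : (C (1:ℝ) - X).natDegree ≤ 1 := by
    refine le_trans (Polynomial.natDegree_sub_le _ _) ?_
    simp
  have hp₁deg : p₁.natDegree ≤ r := by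
    refine le_trans (Polynomial.natDegree_comp_le) ?_
    calc p.natDegree * (C (1:ℝ) - X).natDegree ≤ r * 1 := Nat.mul_le_mul hdeg hlin
      _ = r := by ring
  have hrows₁ : ∀ m, m < r → ∫ s in (0:ℝ)..1, p₁.eval s * s ^ m = 0 := by
    intro m hm
    have hchg : ∫ s in (0:ℝ)..1, p₁.eval s * s ^ m
        = ∫ u in (0:ℝ)..1, p.eval u * (1 - u) ^ m := by
      have h1 : ∀ s : ℝ, p₁.eval s * s ^ m
          = (fun u => p.eval u * (1 - u) ^ m) (1 - s) := by
        intro s; rw [hp₁eval]; simp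
      simp_rw [h1]
      rw [intervalIntegral.integral_comp_sub_left (fun u => p.eval u * (1-u)^m) 1]
      norm_num
    rw [hchg]
    have h2 : ∀ u : ℝ, p.eval u * (1 - u) ^ m
        = p.eval u * ((C 1 - X : Polynomial ℝ) ^ m).eval u := by
      intro u; simp
    simp_rw [h2]
    refine orth_eval p r hrows _ (lt_of_le_of_lt ?_ hm)
    calc ((C 1 - X : Polynomial ℝ) ^ m).natDegree = m * (C 1 - X : Polynomial ℝ).natDegree :=
          Polynomial.natDegree_pow _ _
      _ ≤ m * 1 := Nat.mul_le_mul_left m hlin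
      _ = m := by ring
  -- leading coefficient relation
  have hXC : ((X - C 1 : Polynomial ℝ) ^ r).coeff r = 1 := by
    have hm : ((X - C 1 : Polynomial ℝ) ^ r).Monic := (Polynomial.monic_X_sub_C 1).pow r
    have hnd : ((X - C 1 : Polynomial ℝ) ^ r).natDegree = r := by
      rw [Polynomial.natDegree_pow, Polynomial.natDegree_X_sub_C, mul_one]
    have := hm.coeff_natDegree
    rwa [hnd] at this
  have hCX : ((C 1 - X : Polynomial ℝ) ^ r).coeff r = (-1:ℝ)^r := by
    have hneg : (C 1 - X : Polynomial ℝ) = -(X - C 1) := by ring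
    rw [hneg, neg_pow]
    have hc : ((-1 : Polynomial ℝ) ^ r) = C ((-1:ℝ)^r) := by
      rw [map_pow, map_neg, map_one]
    rw [hc, Polynomial.coeff_C_mul, hXC, mul_one]
  have hcoeff : p₁.coeff r = (-1:ℝ)^r * p.coeff r := by
    have hps := Polynomial.as_sum_range' p (r+1) (Nat.lt_succ_of_le hdeg)
    have : p₁ = ∑ j ∈ Finset.range (r+1), C (p.coeff j) * (C 1 - X) ^ j := by
      rw [hp₁]
      conv_lhs => rw [hps]
      rw [Polynomial.sum_comp]
      congr 1; ext j
      rw [Polynomial.monomial_comp]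
    rw [this, Polynomial.finset_sum_coeff]
    rw [Finset.sum_eq_single r]
    · rw [Polynomial.coeff_C_mul, hCX]; ring
    · intro j hj hjr
      have hjlt : j < r := lt_of_le_of_ne (Nat.lt_succ_iff.mp (Finset.mem_range.mp hj)) hjr
      rw [Polynomial.coeff_C_mul]
      have : ((C 1 - X : Polynomial ℝ) ^ j).natDegree < r := by
        calc ((C 1 - X : Polynomial ℝ) ^ j).natDegree = j * (C 1 - X : Polynomial ℝ).natDegree :=
              Polynomial.natDegree_pow _ _
          _ ≤ j * 1 := Nat.mul_le_mul_left j hlin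
          _ = j := by ring
          _ < r := hjlt
      rw [Polynomial.coeff_eq_zero_of_natDegree_lt this, mul_zero]
    · intro h; exact absurd (Finset.self_mem_range_succ r) h
  set d : Polynomial ℝ := p₁ - C ((-1:ℝ)^r) * p with hd
  have hddeg : d.natDegree ≤ r := by
    refine le_trans (Polynomial.natDegree_sub_le _ _) ?_
    refine max_le hp₁deg (le_trans (Polynomial.natDegree_C_mul_le _ _) hdeg)
  have hdcoeff : d.coeff r = 0 := by
    rw [hd, Polynomial.coeff_sub, Polynomial.coeff_C_mul, hcoeff]; ring
  have hdlt : d.natDegree < r := by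
    rcases eq_or_ne d 0 with h0 | h0
    · rw [h0]; simpa using hr
    · refine lt_of_le_of_ne hddeg fun hcon => ?_
      have := Polynomial.leadingCoeff_ne_zero.mpr h0
      rw [Polynomial.leadingCoeff, hcon, hdcoeff] at this
      exact this rfl
  have hdrows : ∀ m, m < r → ∫ s in (0:ℝ)..1, d.eval s * s ^ m = 0 := by
    intro m hm
    have h1 : ∀ s : ℝ, d.eval s * s ^ m
        = p₁.eval s * s ^ m - (-1:ℝ)^r * (p.eval s * s ^ m) := by
      intro s; rw [hd]; simp; ring
    simp_rw [h1]
    rw [intervalIntegral.integral_sub, intervalIntegral.integral_const_mul,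
      hrows₁ m hm, hrows m hm]
    · ring
    · exact (p₁.continuous.mul (continuous_pow m)).intervalIntegrable _ _
    · exact (continuous_const.mul (p.continuous.mul (continuous_pow m))).intervalIntegrable _ _
  have hdzero : d = 0 := by
    by_contra h0
    have hpos := poly_sq_int_pos (C 1) d (by intro s _; simp) (by intro s _; simp) h0
    have h1 : ∀ s : ℝ, (C 1 : Polynomial ℝ).eval s * d.eval s ^ 2 = d.eval s * d.eval s := by
      intro s; simp; ring
    rw [intervalIntegral.integral_congr (fun s _ => h1 s)] at hpos
    rw [orth_eval d r hdrows d hdlt] at hpos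
    exact lt_irrefl _ hpos
  have hfin : p₁ = C ((-1:ℝ)^r) * p := by
    have := sub_eq_zero.mp hdzero
    exact this
  have hev := congrArg (Polynomial.eval (0:ℝ)) hfin
  rw [hp₁eval 0] at hev
  simp only [sub_zero, hlast, Polynomial.eval_mul, Polynomial.eval_C] at hev
  have hsq : ((-1:ℝ)^r) * ((-1:ℝ)^r) = 1 := by
    rw [← pow_add]
    simp [pow_add, ← two_mul, pow_mul]
  linear_combination (-(Polynomial.eval 0 p)) * hsq - ((-1:ℝ)^r) * hev

lemma mulVec_abs_bound {n : ℕ} (Mx : Matrix (Fin n) (Fin n) ℝ) (v : Fin n → ℝ) (α b : ℝ)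
    (hM : ∀ i j, |Mx i j| ≤ α) (hv : ∀ j, |v j| ≤ b) (i : Fin n) :
    |Mx.mulVec v i| ≤ (n:ℝ) * (α * b) := by
  rw [Matrix.mulVec, dotProduct]
  refine le_trans (Finset.abs_sum_le_sum_abs _ _) ?_
  have h2 : ∀ j ∈ Finset.univ, |Mx i j * v j| ≤ α * b := by
    intro j _
    rw [abs_mul]
    exact mul_le_mul (hM i j) (hv j) (abs_nonneg _) ((abs_nonneg _).trans (hM i j))
  calc ∑ j, |Mx i j * v j| ≤ (Finset.univ : Finset (Fin n)).card • (α * b) :=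
        Finset.sum_le_card_nsmul _ _ _ h2
    _ = (n:ℝ) * (α * b) := by simp [nsmul_eq_mul]

set_option maxHeartbeats 1000000 in
/-- On a uniform mesh `t_j = j h`, `h = T/N`, the orthogonal polynomials `P_r^i` on
`[t_{i-1}, t_i]` for a multiplicative weight `w` with `w(t) = 1 + O(t)` and
`0 ≤ w₀ ≤ w ≤ w₁` on `[0,T]`, normalized by `P_r^i(t_i) = 1`, satisfy as `h → 0`:
(a) `P_r^i(t_{i-1}) = (−1)^r + O(h)`; (b) `∫ (P_r^i)² w = O(h)`;
(c) `∫ P_r^i (t − t_{i-1})^k w = O(h^{k+1})`, uniformly in `i`. -/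
theorem stmt_18 (T w₀ w₁ : ℝ) (hT : 0 < T) (w : ℝ → ℝ)
    (hw₀ : 0 ≤ w₀)
    (hbound : ∀ t ∈ Icc (0:ℝ) T, w₀ ≤ w t ∧ w t ≤ w₁)
    (hwpos : ∀ t ∈ Icc (-T) T, 0 < w t)
    (hmul : ∀ t s : ℝ, t ∈ Icc (-T) T → s ∈ Icc (-T) T → t + s ∈ Icc (-T) T →
      w (t + s) = w t * w s)
    (hone : ∃ C₀ > (0:ℝ), ∀ t ∈ Icc (-T) T, |w t - 1| ≤ C₀ * |t|)
    (r k : ℕ) :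
    ∃ C > (0:ℝ), ∃ N₀ : ℕ, ∀ N : ℕ, N₀ ≤ N → ∀ i : ℕ, 1 ≤ i → i ≤ N →
      ∀ P : Polynomial ℝ, P.natDegree = r →
        P.eval ((i : ℝ) * (T / N)) = 1 →
        (∀ q : Polynomial ℝ, q.degree < (r : WithBot ℕ) →
          ∫ t in (((i:ℝ) - 1) * (T / N))..((i:ℝ) * (T / N)),
            P.eval t * q.eval t * w t = 0) →
        |P.eval (((i:ℝ) - 1) * (T / N)) - (-1 : ℝ)^r| ≤ C * (T / N) ∧
        |∫ t in (((i:ℝ) - 1) * (T / N))..((i:ℝ) * (T / N)), (P.eval t)^2 * w t|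
          ≤ C * (T / N) ∧
        |∫ t in (((i:ℝ) - 1) * (T / N))..((i:ℝ) * (T / N)),
            P.eval t * (t - ((i:ℝ) - 1) * (T / N))^k * w t|
          ≤ C * (T / N)^(k + 1) := by
  classical
  obtain ⟨C₀, hC₀pos, hC₀⟩ := hone
  have hT0T : (0:ℝ) ∈ Icc (-T) T := ⟨by linarith, hT.le⟩
  have hw0 : w 0 = 1 := by
    have h1 := hmul 0 0 hT0T hT0T (by simpa using hT0T)
    rw [add_zero] at h1
    have h2 := hwpos 0 hT0T
    nlinarith [h1, h2]
  have hw₁1 : 1 ≤ w₁ := by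
    have := (hbound 0 ⟨le_refl 0, hT.le⟩).2
    rwa [hw0] at this
  have hwpos' : ∀ t ∈ Icc (0:ℝ) T, 0 < w t := fun t ht =>
    hwpos t ⟨by linarith [ht.1], ht.2⟩
  have hwle : ∀ t ∈ Icc (0:ℝ) T, w t ≤ w₁ := fun t ht => (hbound t ht).2
  -- Lipschitz continuity of w on [0,T]
  have hlipkey : ∀ x ∈ Icc (0:ℝ) T, ∀ y ∈ Icc (0:ℝ) T, x ≤ y →
      |w y - w x| ≤ w₁ * C₀ * (y - x) := by
    intro x hx y hy hxy
    have hyx : y - x ∈ Icc (-T) T := ⟨by linarith [hx.1, hy.1, hx.2, hy.2], by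
      linarith [hx.1, hy.2]⟩
    have hx' : x ∈ Icc (-T) T := ⟨by linarith [hx.1], hx.2⟩
    have hsum : x + (y - x) ∈ Icc (-T) T := by
      have : x + (y - x) = y := by ring
      rw [this]; exact ⟨by linarith [hy.1], hy.2⟩
    have h1 := hmul x (y - x) hx' hyx hsum
    have h2 : x + (y - x) = y := by ring
    rw [h2] at h1
    have h3 : w y - w x = w x * (w (y - x) - 1) := by rw [h1]; ring
    rw [h3, abs_mul]
    have h4 : |w x| ≤ w₁ := by
      rw [abs_of_pos (hwpos' x hx)]; exact hwle x hx
    have h5 : |w (y - x) - 1| ≤ C₀ * (y - x) := by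
      have := hC₀ (y - x) hyx
      rwa [abs_of_nonneg (by linarith : (0:ℝ) ≤ y - x)] at this
    calc |w x| * |w (y - x) - 1| ≤ w₁ * (C₀ * (y - x)) := by
          refine mul_le_mul h4 h5 (abs_nonneg _) (by linarith)
      _ = w₁ * C₀ * (y - x) := by ring
  have hcw : ContinuousOn w (Icc (0:ℝ) T) := by
    have : LipschitzOnWith (Real.toNNReal (w₁ * C₀)) w (Icc (0:ℝ) T) := by
      refine LipschitzOnWith.of_dist_le_mul fun x hx y hy => ?_
      rw [Real.dist_eq, Real.dist_eq]
      have hcoe : (Real.toNNReal (w₁ * C₀) : ℝ) = w₁ * C₀ :=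
        Real.coe_toNNReal _ (by positivity)
      rw [hcoe]
      rcases le_total x y with hxy | hxy
      · have h6 := hlipkey x hx y hy hxy
        rw [abs_sub_comm, abs_sub_comm x y, abs_of_nonneg (by linarith : (0:ℝ) ≤ y - x)]
        exact h6
      · have h6 := hlipkey y hy x hx hxy
        rw [abs_of_nonneg (by linarith : (0:ℝ) ≤ x - y)]
        exact h6
    exact this.continuousOn
  -- matrix data
  set n1 : ℕ := r + 1 with hn1
  set B : Matrix (Fin n1) (Fin n1) ℝ := (Lmat r)⁻¹ with hB
  have hdet : IsUnit (Lmat r).det := isUnit_iff_ne_zero.mpr (det_Lmat_ne_zero r)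
  have hBL : B * Lmat r = 1 := Matrix.nonsing_inv_mul _ hdet
  have hLB : Lmat r * B = 1 := Matrix.mul_nonsing_inv _ hdet
  set β : ℝ := (∑ m : Fin n1, ∑ j : Fin n1, |B m j|) + 1 with hβ
  have hβpos : 0 < β := by
    have : 0 ≤ ∑ m : Fin n1, ∑ j : Fin n1, |B m j| :=
      Finset.sum_nonneg fun m _ => Finset.sum_nonneg fun j _ => abs_nonneg _
    linarith
  have hBent : ∀ m j, |B m j| ≤ β := by
    intro m j
    have h1 : |B m j| ≤ ∑ j' : Fin n1, |B m j'| :=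
      Finset.single_le_sum (f := fun j' => |B m j'|) (fun j' _ => abs_nonneg _)
        (Finset.mem_univ j)
    have h2 : ∑ j' : Fin n1, |B m j'| ≤ ∑ m' : Fin n1, ∑ j' : Fin n1, |B m' j'| :=
      Finset.single_le_sum (f := fun m' => ∑ j' : Fin n1, |B m' j'|)
        (fun m' _ => Finset.sum_nonneg fun j' _ => abs_nonneg _) (Finset.mem_univ m)
    linarith
  set a0 : Fin n1 → ℝ := B.mulVec (eVec r) with ha0
  have hLa0 : (Lmat r).mulVec a0 = eVec r := by
    rw [ha0, Matrix.mulVec_mulVec, hLB, Matrix.one_mulVec]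
  have ha00 : a0 ⟨0, Nat.succ_pos r⟩ = (-1:ℝ)^r := by
    have hrows : ∀ m, m < r → ∫ s in (0:ℝ)..1, (vecPoly r a0).eval s * s ^ m = 0 := by
      intro m hm
      rw [← mulVec_row_lt r a0 m hm, hLa0]
      simp [eVec, hm]
    have hlast : (vecPoly r a0).eval 1 = 1 := by
      rw [← mulVec_row_last r a0, hLa0]
      simp [eVec, Fin.last]
    have := legendre_endpoint r (vecPoly r a0) (vecPoly_natDegree_le r a0) hrows hlast
    rw [← this, ← Polynomial.coeff_zero_eq_eval_zero]
    exact (vecPoly_coeff r a0 ⟨0, Nat.succ_pos r⟩).symm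
  set A0max : ℝ := (∑ j : Fin n1, |a0 j|) + 1 with hA0max
  have hA0pos : 1 ≤ A0max := by
    have : 0 ≤ ∑ j : Fin n1, |a0 j| := Finset.sum_nonneg fun j _ => abs_nonneg _
    linarith
  have ha0le : ∀ j, |a0 j| ≤ A0max := by
    intro j
    have := Finset.single_le_sum (fun j' (_ : j' ∈ Finset.univ) => abs_nonneg (a0 j'))
      (Finset.mem_univ j)
    linarith
  set G : ℝ := (n1:ℝ)^2 * β * C₀ with hG
  have hn1pos : (0:ℝ) < (n1:ℝ) := Nat.cast_pos.mpr (Nat.succ_pos r)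
  have hGpos : 0 < G := by
    rw [hG]
    exact mul_pos (mul_pos (pow_pos hn1pos 2) hβpos) hC₀pos
  set Pb : ℝ := 2 * (n1:ℝ) * A0max with hPb
  have hPbpos : 0 < Pb := by
    rw [hPb]
    exact mul_pos (mul_pos two_pos hn1pos) (by linarith)
  set Ca : ℝ := 2 * G * A0max with hCa
  set Cb : ℝ := Pb^2 * w₁ with hCb
  set Cc : ℝ := Pb * w₁ with hCc
  have hCapos : 0 < Ca := by
    rw [hCa]; exact mul_pos (mul_pos two_pos hGpos) (by linarith)
  have hCmaxpos : (0:ℝ) < max Ca (max Cb Cc) + 1 := by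
    have := le_max_left Ca (max Cb Cc)
    linarith
  refine ⟨max Ca (max Cb Cc) + 1, hCmaxpos, ⌈2 * G * T⌉₊ + 1, ?_⟩
  intro N hN i hi1 hiN P hPdeg hPval hPorth
  have hNpos : 0 < N := lt_of_lt_of_le (Nat.succ_pos _) hN
  have hNR : (0:ℝ) < (N:ℝ) := Nat.cast_pos.mpr hNpos
  set h : ℝ := T / (N:ℝ) with hh_def
  have hhpos : 0 < h := div_pos hT hNR
  have hNge : 2 * G * T ≤ (N:ℝ) := by
    have h1 : (2 * G * T) ≤ (⌈2 * G * T⌉₊ : ℝ) := Nat.le_ceil _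
    have h2 : ((⌈2 * G * T⌉₊ + 1 : ℕ) : ℝ) ≤ (N:ℝ) := Nat.cast_le.mpr hN
    push_cast at h2
    linarith
  have hGh : G * h ≤ 1/2 := by
    rw [hh_def]
    rw [show G * (T / (N:ℝ)) = (G * T) / (N:ℝ) by ring, div_le_iff₀ hNR]
    linarith
  have hN1 : (1:ℝ) ≤ (N:ℝ) := Nat.one_le_cast.mpr hNpos
  have hhT : h ≤ T := by
    rw [hh_def]
    calc T / (N:ℝ) ≤ T / 1 := by
          apply div_le_div_of_nonneg_left hT.le one_pos hN1
      _ = T := div_one T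
  set c : ℝ := ((i:ℝ) - 1) * h with hc_def
  have hi1R : (1:ℝ) ≤ (i:ℝ) := Nat.one_le_cast.mpr hi1
  have hiNR : (i:ℝ) ≤ (N:ℝ) := Nat.cast_le.mpr hiN
  have hc0 : 0 ≤ c := by
    rw [hc_def]; exact mul_nonneg (by linarith) hhpos.le
  have hch : c + h = (i:ℝ) * h := by rw [hc_def]; ring
  have hNh : (N:ℝ) * h = T := by
    rw [hh_def]; field_simp
  have hchT : (i:ℝ) * h ≤ T := by
    rw [← hNh]
    exact mul_le_mul_of_nonneg_right hiNR hhpos.le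
  have hcT : c ≤ T := by linarith
  have hmemc : c ∈ Icc (-T) T := ⟨by linarith, hcT⟩
  -- scaled polynomial
  set Q : Polynomial ℝ := P.comp (Polynomial.C h * Polynomial.X + Polynomial.C c) with hQdef
  have hQdeg : Q.natDegree ≤ r := by
    refine le_trans Polynomial.natDegree_comp_le ?_
    rw [hPdeg]
    calc r * (Polynomial.C h * Polynomial.X + Polynomial.C c).natDegree ≤ r * 1 :=
          Nat.mul_le_mul_left r Polynomial.natDegree_linear_le
      _ = r := mul_one r
  have hQeval : ∀ s : ℝ, Q.eval s = P.eval (h * s + c) := by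
    intro s; rw [hQdef, Polynomial.eval_comp]; simp
  set a : Fin n1 → ℝ := fun j => Q.coeff (j:ℕ) with ha_def
  have hQs : ∀ x : ℝ, Q.eval x = ∑ j : Fin n1, a j * x ^ (j:ℕ) := by
    intro x
    rw [Polynomial.eval_eq_sum_range' (lt_of_le_of_lt hQdeg (Nat.lt_succ_self r))]
    rw [← Fin.sum_univ_eq_sum_range (fun j => Q.coeff j * x ^ j)]
  have hQval1 : ∑ j : Fin n1, a j = 1 := by
    have h1 := (hQs 1).symm
    simp only [one_pow, mul_one] at h1
    rw [hQeval 1, show h * 1 + c = (i:ℝ) * h by rw [hc_def]; ring, hPval] at h1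
    exact h1
  -- moments
  set W : ℝ → ℝ := fun s => w (h * s) with hW_def
  have hmaps : ∀ s ∈ Icc (0:ℝ) 1, h * s ∈ Icc (0:ℝ) T := by
    intro s hs
    constructor
    · exact mul_nonneg hhpos.le hs.1
    · calc h * s ≤ h * 1 := mul_le_mul_of_nonneg_left hs.2 hhpos.le
        _ = h := mul_one h
        _ ≤ T := hhT
  have hcWs : ContinuousOn W (Icc (0:ℝ) 1) := by
    refine ContinuousOn.comp hcw ((continuous_const.mul continuous_id).continuousOn) hmaps
  have hMint : ∀ n : ℕ, IntervalIntegrable (fun s => s^n * W s) volume 0 1 := by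
    intro n
    apply ContinuousOn.intervalIntegrable
    rw [uIcc_of_le zero_le_one]
    exact (continuous_pow n).continuousOn.mul hcWs
  set Mh : ℕ → ℝ := fun n => ∫ s in (0:ℝ)..1, s^n * W s with hMh_def
  have hMh : ∀ n : ℕ, |Mh n - 1/((n:ℝ)+1)| ≤ C₀ * h := by
    intro n
    have hpow : (∫ s in (0:ℝ)..1, s^n) = 1/((n:ℝ)+1) := by
      rw [integral_pow]; norm_num
    have hsub : Mh n - 1/((n:ℝ)+1) = ∫ s in (0:ℝ)..1, (s^n * W s - s^n) := by
      rw [intervalIntegral.integral_sub (hMint n)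
        ((continuous_pow n).intervalIntegrable 0 1), hpow]
    rw [hsub]
    have hb : ∀ s ∈ uIoc (0:ℝ) 1, ‖s^n * W s - s^n‖ ≤ C₀ * h := by
      intro s hs
      rw [Set.uIoc_of_le zero_le_one] at hs
      have hs1 : 0 < s := hs.1
      have hs2 : s ≤ 1 := hs.2
      have h1 : s^n * W s - s^n = s^n * (w (h*s) - 1) := by simp only [hW_def]; ring
      rw [h1, Real.norm_eq_abs, abs_mul]
      have h2 : |s^n| ≤ 1 := by
        rw [abs_pow]
        exact pow_le_one₀ (abs_nonneg s) (by rw [abs_of_pos hs1]; exact hs2)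
      have h3 : h * s ∈ Icc (-T) T := by
        have := hmaps s ⟨hs1.le, hs2⟩
        exact ⟨by linarith [this.1], this.2⟩
      have h4 : |w (h*s) - 1| ≤ C₀ * h := by
        refine le_trans (hC₀ (h*s) h3) ?_
        rw [abs_of_nonneg (mul_nonneg hhpos.le hs1.le)]
        have h5 : h * s ≤ h := by
          calc h * s ≤ h * 1 := mul_le_mul_of_nonneg_left hs2 hhpos.le
            _ = h := mul_one h
        exact mul_le_mul_of_nonneg_left h5 hC₀pos.le
      calc |s^n| * |w (h*s) - 1| ≤ 1 * (C₀ * h) :=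
            mul_le_mul h2 h4 (abs_nonneg _) one_pos.le
        _ = C₀ * h := one_mul _
    have := intervalIntegral.norm_integral_le_of_norm_le_const hb
    simpa using this
  -- row equations
  have hrowm : ∀ m : ℕ, m < r → ∑ j : Fin n1, a j * Mh (m + (j:ℕ)) = 0 := by
    intro m hm
    set qm : Polynomial ℝ := (Polynomial.C h⁻¹ * (Polynomial.X - Polynomial.C c))^m
      with hqm_def
    have hqmdeg : qm.degree < (r : WithBot ℕ) := by
      refine lt_of_le_of_lt Polynomial.degree_le_natDegree ?_
      have h1 : qm.natDegree ≤ m := by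
        rw [hqm_def, Polynomial.natDegree_pow]
        have h2 : (Polynomial.C h⁻¹ * (Polynomial.X - Polynomial.C c)).natDegree ≤ 1 :=
          le_trans (Polynomial.natDegree_C_mul_le _ _)
            (le_of_eq (Polynomial.natDegree_X_sub_C c))
        calc m * (Polynomial.C h⁻¹ * (Polynomial.X - Polynomial.C c)).natDegree
            ≤ m * 1 := Nat.mul_le_mul_left m h2
          _ = m := mul_one m
      exact_mod_cast lt_of_le_of_lt h1 hm
    have h0 := hPorth qm hqmdeg
    have hchg := intervalIntegral.integral_comp_mul_add (a := (0:ℝ)) (b := 1)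
        (fun t => P.eval t * qm.eval t * w t) (ne_of_gt hhpos) c
    simp only [mul_zero, zero_add, mul_one] at hchg
    rw [show h + c = (i:ℝ) * h by rw [hc_def]; ring] at hchg
    rw [h0, smul_zero] at hchg
    have hintg : ∀ s : ℝ, P.eval (h*s+c) * qm.eval (h*s+c) * w (h*s+c)
        = Q.eval s * s^m * w (h*s + c) := by
      intro s
      rw [hQeval s, hqm_def]
      simp only [Polynomial.eval_pow, Polynomial.eval_mul, Polynomial.eval_C,
        Polynomial.eval_sub, Polynomial.eval_X, Polynomial.eval_add]
      rw [show h⁻¹ * (h*s + c - c) = s by field_simp; ring]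
    simp_rw [hintg] at hchg
    have hsplit : EqOn (fun s => Q.eval s * s^m * w (h*s + c))
        (fun s => w c * (Q.eval s * (s^m * W s))) (uIcc (0:ℝ) 1) := by
      intro s hs
      rw [uIcc_of_le zero_le_one] at hs
      have h1 : h*s ∈ Icc (0:ℝ) T := hmaps s hs
      have h2 : c + h*s ∈ Icc (-T) T := by
        constructor
        · linarith [h1.1, hc0]
        · have h4 : h * s ≤ h := by
            calc h * s ≤ h * 1 := mul_le_mul_of_nonneg_left hs.2 hhpos.le
              _ = h := mul_one h
          linarith [hch, hchT]
      have h3 := hmul c (h*s) hmemc ⟨by linarith [h1.1], h1.2⟩ h2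
      simp only [hW_def]
      rw [show h*s + c = c + h*s by ring, h3]
      ring
    rw [intervalIntegral.integral_congr hsplit, intervalIntegral.integral_const_mul] at hchg
    have hwcne : w c ≠ 0 := ne_of_gt (hwpos c hmemc)
    have hint0 : ∫ s in (0:ℝ)..1, Q.eval s * (s^m * W s) = 0 := by
      rcases mul_eq_zero.mp hchg with h' | h'
      · exact absurd h' hwcne
      · exact h'
    have hexp : ∀ s : ℝ, Q.eval s * (s^m * W s)
        = ∑ j : Fin n1, a j * (s^(m + (j:ℕ)) * W s) := by
      intro s
      rw [hQs s, Finset.sum_mul]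
      refine Finset.sum_congr rfl fun j _ => ?_
      rw [pow_add]; ring
    rw [intervalIntegral.integral_congr (fun s _ => hexp s)] at hint0
    have hfs := intervalIntegral.integral_finset_sum (μ := volume) (a := (0:ℝ)) (b := 1)
      (s := (Finset.univ : Finset (Fin n1)))
      (f := fun (j : Fin n1) (s : ℝ) => a j * (s^(m + (j:ℕ)) * W s))
      (fun j _ => ((hMint (m + (j:ℕ))).const_mul (a j)))
    rw [hfs] at hint0
    simp only [hMh_def]
    simp_rw [intervalIntegral.integral_const_mul] at hint0
    exact hint0
  -- matrix equation
  set LM : Matrix (Fin n1) (Fin n1) ℝ :=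
    fun m j => if (m:ℕ) < r then Mh ((m:ℕ)+(j:ℕ)) else 1 with hLM_def
  have hLMa : LM.mulVec a = eVec r := by
    funext m
    rw [Matrix.mulVec, dotProduct]
    by_cases hm : (m:ℕ) < r
    · simp only [hLM_def, hm, if_true, eVec]
      rw [← hrowm (m:ℕ) hm]
      exact Finset.sum_congr rfl fun j _ => mul_comm _ _
    · simp only [hLM_def, hm, if_false, eVec, one_mul]
      exact hQval1
  have hΔ : ∀ (m j : Fin n1), |LM m j - Lmat r m j| ≤ C₀ * h := by
    intro m j
    by_cases hm : (m:ℕ) < r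
    · simp only [hLM_def, Lmat, hm, if_true]
      have h1 := hMh ((m:ℕ)+(j:ℕ))
      have h2 : ((((m:ℕ)+(j:ℕ) : ℕ)):ℝ) + 1 = ((m:ℕ):ℝ)+((j:ℕ):ℝ)+1 := by
        push_cast; ring
      rw [h2] at h1
      exact h1
    · simp only [hLM_def, Lmat, hm, if_false, sub_self, abs_zero]
      positivity
  set u : Fin n1 → ℝ := (LM - Lmat r).mulVec a with hu_def
  have hkey : ∀ m, a m - a0 m = -(B.mulVec u m) := by
    have h1 : (Lmat r).mulVec a = eVec r - u := by
      funext m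
      have h2 := congrFun hLMa m
      rw [hu_def]
      simp only [Pi.sub_apply, Matrix.sub_mulVec]
      rw [h2]
      ring
    intro m
    have h2 : B.mulVec ((Lmat r).mulVec a) = a := by
      rw [Matrix.mulVec_mulVec, hBL, Matrix.one_mulVec]
    rw [h1, Matrix.mulVec_sub] at h2
    rw [← ha0] at h2
    have h3 := congrFun h2 m
    simp only [Pi.sub_apply] at h3
    linarith [h3]
  have hFinNE : (Finset.univ : Finset (Fin n1)).Nonempty := Finset.univ_nonempty
  set Amax : ℝ := Finset.univ.sup' hFinNE (fun j => |a j|) with hAmax_def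
  have hAle : ∀ j, |a j| ≤ Amax := fun j =>
    Finset.le_sup' (f := fun j => |a j|) (Finset.mem_univ j)
  have hAnn : 0 ≤ Amax := le_trans (abs_nonneg _) (hAle ⟨0, Nat.succ_pos r⟩)
  have hub : ∀ m, |u m| ≤ (n1:ℝ) * ((C₀*h) * Amax) := by
    intro m
    rw [hu_def]
    exact mulVec_abs_bound _ _ _ _
      (fun i' j => by simpa [Matrix.sub_apply] using hΔ i' j) hAle m
  have hBub : ∀ m, |B.mulVec u m| ≤ (n1:ℝ) * (β * ((n1:ℝ) * ((C₀*h) * Amax))) :=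
    fun m => mulVec_abs_bound _ _ _ _ hBent hub m
  have hdiff : ∀ m, |a m - a0 m| ≤ G * h * Amax := by
    intro m
    rw [hkey m, abs_neg]
    refine le_trans (hBub m) (le_of_eq ?_)
    rw [hG]; ring
  have hAbound : Amax ≤ 2 * A0max := by
    have h1 : Amax ≤ A0max + G * h * Amax := by
      refine Finset.sup'_le _ _ fun m _ => ?_
      have h2 := hdiff m
      have h3 := ha0le m
      calc |a m| = |a0 m + (a m - a0 m)| := by ring_nf
        _ ≤ |a0 m| + |a m - a0 m| := abs_add_le _ _
        _ ≤ A0max + G*h*Amax := add_le_add h3 h2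
    have h2 : G * h * Amax ≤ (1/2) * Amax := mul_le_mul_of_nonneg_right hGh hAnn
    linarith
  have hdiff2 : ∀ m, |a m - a0 m| ≤ Ca * h := by
    intro m
    refine le_trans (hdiff m) ?_
    have h1 : G * h * Amax ≤ G * h * (2*A0max) :=
      mul_le_mul_of_nonneg_left hAbound (mul_nonneg hGpos.le hhpos.le)
    calc G * h * Amax ≤ G * h * (2*A0max) := h1
      _ = Ca * h := by rw [hCa]; ring
  -- uniform bound on P over the interval
  have hPB : ∀ t ∈ Icc c ((i:ℝ)*h), |P.eval t| ≤ Pb := by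
    intro t ht
    set s := (t - c)/h with hs_def
    have hs01 : s ∈ Icc (0:ℝ) 1 := by
      constructor
      · exact div_nonneg (by linarith [ht.1]) hhpos.le
      · rw [hs_def, div_le_one hhpos]; linarith [ht.2, hch]
    have hts : h * s + c = t := by rw [hs_def]; field_simp; ring
    have h1 : P.eval t = Q.eval s := by rw [hQeval s, hts]
    rw [h1, hQs s]
    refine le_trans (Finset.abs_sum_le_sum_abs _ _) ?_
    have h2 : ∀ j ∈ (Finset.univ : Finset (Fin n1)), |a j * s^(j:ℕ)| ≤ 2*A0max := by
      intro j _
      rw [abs_mul]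
      have h3 : |s^(j:ℕ)| ≤ 1 := by
        rw [abs_pow]
        exact pow_le_one₀ (abs_nonneg s) (by rw [abs_of_nonneg hs01.1]; exact hs01.2)
      calc |a j| * |s^(j:ℕ)| ≤ Amax * 1 :=
            mul_le_mul (hAle j) h3 (abs_nonneg _) hAnn
        _ = Amax := mul_one _
        _ ≤ 2*A0max := hAbound
    calc ∑ j : Fin n1, |a j * s^(j:ℕ)|
        ≤ (Finset.univ : Finset (Fin n1)).card • (2*A0max) :=
          Finset.sum_le_card_nsmul _ _ _ h2
      _ = (n1:ℝ) * (2*A0max) := by simp [nsmul_eq_mul]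
      _ = Pb := by rw [hPb]; ring
  have hIcc_sub : Icc c ((i:ℝ)*h) ⊆ Icc (0:ℝ) T := fun t ht =>
    ⟨le_trans hc0 ht.1, le_trans ht.2 hchT⟩
  have hclt : c < (i:ℝ)*h := by linarith [hch, hhpos]
  have hepdiff : (i:ℝ)*h - c = h := by rw [hc_def]; ring
  have hCge : ∀ x ∈ ({Ca, Cb, Cc} : Set ℝ), x ≤ max Ca (max Cb Cc) + 1 := by
    intro x hx
    rcases hx with hx | hx | hx <;> subst hx
    · linarith [le_max_left Ca (max Cb Cc)]
    · linarith [le_max_right Ca (max Cb Cc), le_max_left Cb Cc]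
    · linarith [le_max_right Ca (max Cb Cc), le_max_right Cb Cc]
  refine ⟨?_, ?_, ?_⟩
  · -- (a)
    have hPc : P.eval c = a ⟨0, Nat.succ_pos r⟩ := by
      have h1 : P.eval c = Q.eval 0 := by
        rw [hQeval 0, mul_zero, zero_add]
      rw [h1, ← Polynomial.coeff_zero_eq_eval_zero]
    rw [hPc, ← ha00]
    refine le_trans (hdiff2 _) ?_
    exact mul_le_mul_of_nonneg_right (hCge Ca (by simp)) hhpos.le
  · -- (b)
    have hb : ∀ t ∈ uIoc c ((i:ℝ)*h), ‖(P.eval t)^2 * w t‖ ≤ Cb := by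
      intro t ht
      rw [Set.uIoc_of_le hclt.le] at ht
      have htm : t ∈ Icc c ((i:ℝ)*h) := ⟨ht.1.le, ht.2⟩
      have ht0T : t ∈ Icc (0:ℝ) T := hIcc_sub htm
      have h1 := hPB t htm
      have h2 : 0 < w t := hwpos' t ht0T
      rw [Real.norm_eq_abs, abs_mul, abs_of_pos h2]
      have h3 : |(P.eval t)^2| = |P.eval t|^2 := by
        rw [abs_pow]
      rw [h3]
      have h5 : |P.eval t|^2 ≤ Pb^2 := pow_le_pow_left₀ (abs_nonneg _) h1 2
      have h6 : (0:ℝ) ≤ Pb^2 := pow_nonneg hPbpos.le 2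
      have h7 : |P.eval t|^2 * w t ≤ Pb^2 * w₁ :=
        mul_le_mul h5 (hwle t ht0T) h2.le h6
      rw [hCb]
      exact h7
    have h4 := intervalIntegral.norm_integral_le_of_norm_le_const hb
    rw [hepdiff, abs_of_pos hhpos] at h4
    refine le_trans h4 ?_
    exact mul_le_mul_of_nonneg_right (hCge Cb (by simp)) hhpos.le
  · -- (c)
    have hb : ∀ t ∈ uIoc c ((i:ℝ)*h), ‖P.eval t * (t - c)^k * w t‖ ≤ Cc * h^k := by
      intro t ht
      rw [Set.uIoc_of_le hclt.le] at ht
      have htm : t ∈ Icc c ((i:ℝ)*h) := ⟨ht.1.le, ht.2⟩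
      have ht0T : t ∈ Icc (0:ℝ) T := hIcc_sub htm
      have h1 := hPB t htm
      have h2 : 0 < w t := hwpos' t ht0T
      rw [Real.norm_eq_abs, abs_mul, abs_mul, abs_of_pos h2]
      have h3 : |(t - c)^k| ≤ h^k := by
        rw [abs_pow]
        refine pow_le_pow_left₀ (abs_nonneg _) ?_ k
        rw [abs_of_nonneg (by linarith [ht.1] : (0:ℝ) ≤ t - c)]
        linarith [ht.2, hch]
      have h6 : (0:ℝ) ≤ Pb * h^k := mul_nonneg hPbpos.le (pow_nonneg hhpos.le k)
      have h7 : |P.eval t| * |(t - c)^k| * w t ≤ Pb * h^k * w₁ :=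
        mul_le_mul (mul_le_mul h1 h3 (abs_nonneg _) hPbpos.le) (hwle t ht0T) h2.le h6
      calc |P.eval t| * |(t - c)^k| * w t ≤ Pb * h^k * w₁ := h7
        _ = Cc * h^k := by rw [hCc]; ring
    have h4 := intervalIntegral.norm_integral_le_of_norm_le_const hb
    rw [hepdiff, abs_of_pos hhpos] at h4
    refine le_trans h4 ?_
    calc Cc * h^k * h = Cc * h^(k+1) := by ring
      _ ≤ (max Ca (max Cb Cc) + 1) * h^(k+1) := by
          exact mul_le_mul_of_nonneg_right (hCge Cc (by simp))
            (pow_nonneg hhpos.le (k+1))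
end
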